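/- arXiv:2507.05398 — 9 statements merged into one kernel-verified Lean document; each statement's English description precedes it below -/
import Mathlib

section
/- Let H be a complex Hilbert space and A a positive bounded linear operator on H, inducing the semi-inner product ⟨x,y⟩_A = ⟨Ax,y⟩ and semi-norm ‖x‖_A = √⟨x,x⟩_A. Then for all x, y, z ∈ H with ‖z‖_A = 1, one has |⟨x,z⟩_A · ⟨z,y⟩_A| ≤ (1/2)(‖x‖_A ‖y‖_A + |⟨x,y⟩_A|). -/
open scoped InnerProductSpace

variable {H : Type*} [NormedAddCommGroup H] [InnerProductSpace ℂ H] [CompleteSpace H]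

/-- Buzano's inequality in a genuine complex inner product space. -/
lemma buzano (u v e : H) (he : ‖e‖ = 1) :
    ‖⟪u, e⟫_ℂ * ⟪e, v⟫_ℂ‖ ≤ (‖u‖ * ‖v‖ + ‖⟪u, v⟫_ℂ‖) / 2 := by
  set c : ℂ := ⟪e, v⟫_ℂ with hc
  set w : H := ((2 : ℂ) * c) • e - v with hwdef
  have hxnorm : ‖((2 : ℂ) * c) • e‖ = 2 * ‖c‖ := by
    rw [norm_smul, he, mul_one]
    simp
  have hre : RCLike.re ⟪((2 : ℂ) * c) • e, v⟫_ℂ = 2 * (‖c‖) ^ 2 := by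
    rw [inner_smul_left, ← hc]
    have h1 : (starRingEnd ℂ) (2 * c) * c = 2 * (Complex.normSq c : ℂ) := by
      rw [map_mul, mul_assoc, ← Complex.normSq_eq_conj_mul_self, map_ofNat]
    rw [h1, Complex.sq_norm]
    simp
  have hw : ‖w‖ = ‖v‖ := by
    have h1 : ‖w‖ ^ 2 = ‖v‖ ^ 2 := by
      rw [hwdef, @norm_sub_sq ℂ, hxnorm, hre]
      ring
    calc ‖w‖ = Real.sqrt (‖w‖ ^ 2) := (Real.sqrt_sq (norm_nonneg _)).symm
      _ = Real.sqrt (‖v‖ ^ 2) := by rw [h1]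
      _ = ‖v‖ := Real.sqrt_sq (norm_nonneg _)
  have hiw : ⟪u, w⟫_ℂ = 2 * (⟪u, e⟫_ℂ * c) - ⟪u, v⟫_ℂ := by
    rw [hwdef, inner_sub_right, inner_smul_right]
    ring
  have hcs : ‖⟪u, w⟫_ℂ‖ ≤ ‖u‖ * ‖v‖ := by
    rw [← hw]
    exact norm_inner_le_norm u w
  have htri : ‖2 * (⟪u, e⟫_ℂ * c)‖ ≤
      ‖⟪u, w⟫_ℂ‖ + ‖⟪u, v⟫_ℂ‖ := by
    calc ‖2 * (⟪u, e⟫_ℂ * c)‖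
        = ‖⟪u, w⟫_ℂ + ⟪u, v⟫_ℂ‖ := by rw [hiw]; ring_nf
      _ ≤ ‖⟪u, w⟫_ℂ‖ + ‖⟪u, v⟫_ℂ‖ := norm_add_le _ _
  have h2 : ‖2 * (⟪u, e⟫_ℂ * c)‖ = 2 * ‖⟪u, e⟫_ℂ * c‖ := by
    rw [norm_mul]; simp
  rw [h2] at htri
  linarith

/-- The `A`-semi-inner product `⟪x, y⟫_A = ⟪A x, y⟫`. -/
noncomputable def ipA (A : H →L[ℂ] H) (x y : H) : ℂ := ⟪A x, y⟫_ℂ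

/-- The `A`-semi-norm `‖x‖_A = √(re ⟪A x, x⟫)`. -/
noncomputable def nA (A : H →L[ℂ] H) (x : H) : ℝ := Real.sqrt (ipA A x x).re

set_option synthInstance.maxHeartbeats 1000000 in
theorem stmt0 (A : H →L[ℂ] H) (hA : A.IsPositive) (x y z : H) (hz : nA A z = 1) :
    ‖ipA A x z * ipA A z y‖ ≤
      (1 / 2) * (nA A x * nA A y + ‖ipA A x y‖) := by
  have hA0 : (0 : H →L[ℂ] H) ≤ A := (ContinuousLinearMap.nonneg_iff_isPositive A).mpr hA
  set B : H →L[ℂ] H := CFC.sqrt A with hB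
  have hB0 : (0 : H →L[ℂ] H) ≤ B := CFC.sqrt_nonneg A
  have hBsa : IsSelfAdjoint B :=
    ((ContinuousLinearMap.nonneg_iff_isPositive B).mp hB0).isSelfAdjoint
  have hBsym : B.IsSymmetric := (ContinuousLinearMap.isSelfAdjoint_iff_isSymmetric).mp hBsa
  have hBB : B * B = A := CFC.sqrt_mul_sqrt_self A hA0
  have key : ∀ a b : H, ipA A a b = ⟪B a, B b⟫_ℂ := by
    intro a b
    have : A a = B (B a) := by rw [← hBB]; rfl
    rw [ipA, this]
    exact hBsym (B a) b
  have hnorm : ∀ a : H, nA A a = ‖B a‖ := by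
    intro a
    rw [nA, key a a]
    rw [show (⟪B a, B a⟫_ℂ).re = RCLike.re ⟪B a, B a⟫_ℂ from rfl,
      @inner_self_eq_norm_sq ℂ]
    exact Real.sqrt_sq (norm_nonneg _)
  have hze : ‖B z‖ = 1 := by rw [← hnorm]; exact hz
  have := buzano (B x) (B y) (B z) hze
  rw [key x z, key z y, key x y, hnorm x, hnorm y]
  linarith
end

section
/- For every a, b, e in a complex Hilbert space H with a positive bounded operator A and ‖e‖_A = 1, and every α ∈ [0,1], one has |⟨a,e⟩_A ⟨e,b⟩_A| ≤ ((1+α)/2) ‖a‖_A ‖b‖_A + ((1−α)/2) |⟨a,b⟩_A|. -/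
open scoped InnerProductSpace

variable {H : Type*} [NormedAddCommGroup H] [InnerProductSpace ℂ H] [CompleteSpace H]

/-- Key inequality in a genuine inner product space: Buzano-type bound. -/
lemma buzano_aux (x y f : H) (hf : ‖f‖ = 1) :
    ‖⟪x, f⟫_ℂ * ⟪f, y⟫_ℂ‖ ≤ (‖x‖ * ‖y‖ + ‖⟪x, y⟫_ℂ‖) / 2 := by
  set c : ℂ := ⟪f, x⟫_ℂ with hc
  set d : ℂ := ⟪f, y⟫_ℂ with hd
  have hff : ⟪f, f⟫_ℂ = 1 := by
    rw [inner_self_eq_norm_sq_to_K, hf]; norm_num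
  have hcx : ⟪x, f⟫_ℂ = starRingEnd ℂ c := by rw [hc, ← inner_conj_symm]
  set Px := x - c • f with hPx
  set Py := y - d • f with hPy
  have hinner : ⟪Px, Py⟫_ℂ = ⟪x, y⟫_ℂ - ⟪x, f⟫_ℂ * ⟪f, y⟫_ℂ := by
    simp [hPx, hPy, inner_sub_sub_self, inner_sub_left, inner_sub_right, inner_smul_left,
      inner_smul_right, hff, hcx]
    rw [hf, Complex.ofReal_one]; ring
  have hnormPx : ‖Px‖ ^ 2 = ‖x‖ ^ 2 - ‖⟪x, f⟫_ℂ‖ ^ 2 := by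
    have h1 : ‖Px‖ ^ 2 = ‖x‖ ^ 2 - 2 * Complex.re ⟪x, c • f⟫_ℂ + ‖c • f‖ ^ 2 :=
      norm_sub_sq (𝕜 := ℂ) x (c • f)
    have h2 : ⟪x, c • f⟫_ℂ = c * ⟪x, f⟫_ℂ := inner_smul_right _ _ _
    have h3 : c * ⟪x, f⟫_ℂ = (‖⟪x, f⟫_ℂ‖ : ℂ) ^ 2 := by
      have hc2 : c = starRingEnd ℂ ⟪x, f⟫_ℂ := by rw [hc, inner_conj_symm]
      rw [hc2, ← Complex.normSq_eq_conj_mul_self]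
      simp [Complex.normSq_eq_norm_sq]
    have h4 : ‖c • f‖ = ‖⟪x, f⟫_ℂ‖ := by
      rw [norm_smul, hf, mul_one, hcx]; simp
    rw [h1, h2, h3, h4]
    simp [← Complex.ofReal_pow]
    ring
  have hnormPy : ‖Py‖ ^ 2 = ‖y‖ ^ 2 - ‖⟪f, y⟫_ℂ‖ ^ 2 := by
    have h1 : ‖Py‖ ^ 2 = ‖y‖ ^ 2 - 2 * Complex.re ⟪y, d • f⟫_ℂ + ‖d • f‖ ^ 2 :=
      norm_sub_sq (𝕜 := ℂ) y (d • f)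
    have h2 : ⟪y, d • f⟫_ℂ = d * ⟪y, f⟫_ℂ := inner_smul_right _ _ _
    have h3 : d * ⟪y, f⟫_ℂ = (‖⟪f, y⟫_ℂ‖ : ℂ) ^ 2 := by
      have : ⟪y, f⟫_ℂ = starRingEnd ℂ d := by rw [hd, ← inner_conj_symm]
      rw [this, mul_comm, ← Complex.normSq_eq_conj_mul_self]
      simp [Complex.normSq_eq_norm_sq, hd]
    have h4 : ‖d • f‖ = ‖⟪f, y⟫_ℂ‖ := by rw [norm_smul, hf, mul_one, hd]
    rw [h1, h2, h3, h4]
    simp [← Complex.ofReal_pow]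
    ring
  set p := ‖⟪x, f⟫_ℂ‖ with hp
  set q := ‖⟪f, y⟫_ℂ‖ with hq
  set s := ‖Px‖ with hs
  set t := ‖Py‖ with ht
  have hcs : ‖⟪Px, Py⟫_ℂ‖ ≤ s * t := norm_inner_le_norm _ _
  have hst : s * t + p * q ≤ ‖x‖ * ‖y‖ := by
    have hs0 : 0 ≤ s := norm_nonneg _
    have ht0 : 0 ≤ t := norm_nonneg _
    have hp0 : 0 ≤ p := norm_nonneg _
    have hq0 : 0 ≤ q := norm_nonneg _
    have hX0 : 0 ≤ ‖x‖ := norm_nonneg _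
    have hY0 : 0 ≤ ‖y‖ := norm_nonneg _
    nlinarith [sq_nonneg (s * q - p * t), sq_nonneg (s * t + p * q), hnormPx, hnormPy,
      mul_nonneg hX0 hY0, mul_nonneg (mul_nonneg hs0 ht0) (mul_nonneg hp0 hq0)]
  have hv : ‖⟪x, f⟫_ℂ * ⟪f, y⟫_ℂ‖ = p * q := norm_mul _ _
  have htri : p * q ≤ ‖⟪x, y⟫_ℂ - ⟪x, f⟫_ℂ * ⟪f, y⟫_ℂ‖ + ‖⟪x, y⟫_ℂ‖ := by
    calc p * q = ‖⟪x, f⟫_ℂ * ⟪f, y⟫_ℂ‖ := hv.symm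
    _ = ‖⟪x, y⟫_ℂ - (⟪x, y⟫_ℂ - ⟪x, f⟫_ℂ * ⟪f, y⟫_ℂ)‖ := by ring_nf
    _ ≤ ‖⟪x, y⟫_ℂ‖ + ‖⟪x, y⟫_ℂ - ⟪x, f⟫_ℂ * ⟪f, y⟫_ℂ‖ := norm_sub_le _ _
    _ = ‖⟪x, y⟫_ℂ - ⟪x, f⟫_ℂ * ⟪f, y⟫_ℂ‖ + ‖⟪x, y⟫_ℂ‖ := by ring
  have hmid : ‖⟪x, y⟫_ℂ - ⟪x, f⟫_ℂ * ⟪f, y⟫_ℂ‖ ≤ s * t := by rw [← hinner]; exact hcs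
  rw [hv]
  linarith

set_option synthInstance.maxHeartbeats 1000000 in
set_option maxHeartbeats 1000000 in
theorem stmt1 (A : H →L[ℂ] H) (hA : A.IsPositive) (a b e : H) (he : nA A e = 1)
    (α : ℝ) (hα : α ∈ Set.Icc (0 : ℝ) 1) :
    ‖ipA A a e * ipA A e b‖ ≤
      ((1 + α) / 2) * (nA A a * nA A b) + ((1 - α) / 2) * ‖ipA A a b‖ := by
  have h0 : 0 ≤ A := (A.nonneg_iff_isPositive).mpr hA
  set Q := CFC.sqrt A with hQdef
  have h1 : Q * Q = A := CFC.sqrt_mul_sqrt_self A h0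
  have h2 : IsSelfAdjoint Q := IsSelfAdjoint.of_nonneg (CFC.sqrt_nonneg A)
  have h3 : ContinuousLinearMap.adjoint Q = Q := h2
  have hip : ∀ x y : H, ipA A x y = ⟪Q x, Q y⟫_ℂ := by
    intro x y
    rw [ipA]
    conv_lhs => rw [← h1]
    rw [ContinuousLinearMap.mul_apply, ← h3, ContinuousLinearMap.adjoint_inner_left, h3]
  have hn : ∀ x : H, nA A x = ‖Q x‖ := by
    intro x
    rw [nA, hip, inner_self_eq_norm_sq_to_K (𝕜 := ℂ)]
    simp [Real.sqrt_sq, norm_nonneg, ← Complex.ofReal_pow]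
  have hfe : ‖Q e‖ = 1 := by rw [← hn]; exact he
  have key := buzano_aux (Q a) (Q b) (Q e) hfe
  have hcs : ‖⟪Q a, Q b⟫_ℂ‖ ≤ ‖Q a‖ * ‖Q b‖ := norm_inner_le_norm _ _
  rw [hip, hip, hip, hn, hn]
  rw [norm_mul] at key ⊢
  obtain ⟨hα0, hα1⟩ := hα
  nlinarith [mul_nonneg hα0 (sub_nonneg.mpr hcs)]
end

section
/- For every a, b, e in a complex Hilbert space H with a positive bounded operator A and ‖e‖_A = 1, every α ∈ [0,1] and every real r ≥ 1, one has |⟨a,e⟩_A ⟨e,b⟩_A|^r ≤ ((1+α)/2) ‖a‖_A^r ‖b‖_A^r + ((1−α)/2) |⟨a,b⟩_A|^r. -/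
open scoped InnerProductSpace

variable {H : Type*} [NormedAddCommGroup H] [InnerProductSpace ℂ H] [CompleteSpace H]

/-- Buzano's inequality in a complex inner product space. -/
lemma buzano_aux_s2 (a b e : H) (he : ‖e‖ = 1) :
    ‖⟪a, e⟫_ℂ * ⟪e, b⟫_ℂ‖ ≤ (‖a‖ * ‖b‖ + ‖⟪a, b⟫_ℂ‖) / 2 := by
  set c : ℂ := ⟪e, b⟫_ℂ with hc
  set b' : H := (2 * c) • e - b with hb'
  have hnb' : ‖b'‖ = ‖b‖ := by
    have h1 : ‖b'‖ ^ 2 = ‖b‖ ^ 2 := by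
      rw [hb', @norm_sub_sq ℂ]
      have h2 : ⟪(2 * c) • e, b⟫_ℂ = (starRingEnd ℂ) (2 * c) * c := by
        rw [inner_smul_left, hc]
      have h3 : ‖(2 * c) • e‖ = ‖2 * c‖ := by rw [norm_smul, he, mul_one]
      rw [h2, h3]
      have h4 : RCLike.re ((starRingEnd ℂ) (2 * c) * c) = 2 * Complex.normSq c := by
        simp [RCLike.re_to_complex, Complex.mul_re, Complex.normSq]; ring
      have h5 : ‖(2:ℂ) * c‖ ^ 2 = 4 * Complex.normSq c := by
        rw [norm_mul, mul_pow, Complex.sq_norm,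
          Complex.sq_norm]
        simp [Complex.normSq]; norm_num
      rw [h4, h5]; ring
    calc ‖b'‖ = Real.sqrt (‖b'‖ ^ 2) := (Real.sqrt_sq (norm_nonneg _)).symm
      _ = Real.sqrt (‖b‖ ^ 2) := by rw [h1]
      _ = ‖b‖ := Real.sqrt_sq (norm_nonneg _)
  have key : ⟪a, b'⟫_ℂ = 2 * c * ⟪a, e⟫_ℂ - ⟪a, b⟫_ℂ := by
    rw [hb', inner_sub_right, inner_smul_right]
  have h6 : ‖2 * (⟪a, e⟫_ℂ * c)‖ ≤ ‖a‖ * ‖b‖ + ‖⟪a, b⟫_ℂ‖ := by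
    have : (2 : ℂ) * (⟪a, e⟫_ℂ * c) = ⟪a, b'⟫_ℂ + ⟪a, b⟫_ℂ := by rw [key]; ring
    rw [this]
    calc ‖⟪a, b'⟫_ℂ + ⟪a, b⟫_ℂ‖
        ≤ ‖⟪a, b'⟫_ℂ‖ + ‖⟪a, b⟫_ℂ‖ := norm_add_le _ _
      _ ≤ ‖a‖ * ‖b‖ + ‖⟪a, b⟫_ℂ‖ := by
          have := norm_inner_le_norm (𝕜 := ℂ) a b'
          rw [hnb'] at this
          exact add_le_add_left this _
  have h7 : ‖2 * (⟪a, e⟫_ℂ * c)‖ = 2 * ‖⟪a, e⟫_ℂ * c‖ := by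
    rw [norm_mul]; simp
  rw [h7] at h6
  linarith

theorem stmt2 (A : H →L[ℂ] H) (hA : A.IsPositive) (a b e : H) (he : nA A e = 1)
    (α : ℝ) (hα : α ∈ Set.Icc (0 : ℝ) 1) (r : ℝ) (hr : 1 ≤ r) :
    ‖ipA A a e * ipA A e b‖ ^ r ≤
      ((1 + α) / 2) * (nA A a ^ r * nA A b ^ r) +
        ((1 - α) / 2) * ‖ipA A a b‖ ^ r := by
  obtain ⟨hα0, hα1⟩ := hα
  -- square root of A
  set s : H →L[ℂ] H := CFC.sqrt A with hs
  have h0 : (0 : H →L[ℂ] H) ≤ A := (ContinuousLinearMap.nonneg_iff_isPositive A).2 hA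
  have hmul : s * s = A := CFC.sqrt_mul_sqrt_self A h0
  have hsa : IsSelfAdjoint s := IsSelfAdjoint.of_nonneg (CFC.sqrt_nonneg A)
  have hadj : ContinuousLinearMap.adjoint s = s := by
    rw [← ContinuousLinearMap.star_eq_adjoint]; exact hsa
  have hip : ∀ x y : H, ipA A x y = ⟪s x, s y⟫_ℂ := by
    intro x y
    have h := ContinuousLinearMap.adjoint_inner_left s y (s x)
    rw [hadj] at h
    rw [ipA, ← hmul, ContinuousLinearMap.mul_apply, ← h]
  have hn : ∀ x : H, nA A x = ‖s x‖ := by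
    intro x
    rw [nA, hip]
    have : (⟪s x, s x⟫_ℂ).re = ‖s x‖ ^ 2 := by
      rw [← RCLike.re_to_complex]; exact inner_self_eq_norm_sq (𝕜 := ℂ) (s x)
    rw [this, Real.sqrt_sq (norm_nonneg _)]
  have hse : ‖s e‖ = 1 := by rw [← hn]; exact he
  rw [hip, hip, hip, hn, hn]
  set u : ℝ := ‖s a‖ * ‖s b‖ with hu
  set v : ℝ := ‖⟪s a, s b⟫_ℂ‖ with hv
  set X : ℝ := ‖⟪s a, s e⟫_ℂ * ⟪s e, s b⟫_ℂ‖ with hX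
  have hBuz : X ≤ (u + v) / 2 := buzano_aux_s2 (s a) (s b) (s e) hse
  have hCS : X ≤ u := by
    rw [hX, norm_mul, hu]
    calc ‖⟪s a, s e⟫_ℂ‖ * ‖⟪s e, s b⟫_ℂ‖
        ≤ (‖s a‖ * ‖s e‖) * (‖s e‖ * ‖s b‖) :=
          mul_le_mul (norm_inner_le_norm _ _) (norm_inner_le_norm _ _)
            (norm_nonneg _) (by positivity)
      _ = ‖s a‖ * ‖s b‖ := by rw [hse]; ring
  have hw : X ≤ (1 + α) / 2 * u + (1 - α) / 2 * v := by nlinarith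
  have hX0 : 0 ≤ X := norm_nonneg _
  have hu0 : 0 ≤ u := by positivity
  have hv0 : 0 ≤ v := norm_nonneg _
  have hr0 : 0 ≤ r := le_trans zero_le_one hr
  have step1 : X ^ r ≤ ((1 + α) / 2 * u + (1 - α) / 2 * v) ^ r :=
    Real.rpow_le_rpow hX0 hw hr0
  have step2 : ((1 + α) / 2 * u + (1 - α) / 2 * v) ^ r ≤
      (1 + α) / 2 * u ^ r + (1 - α) / 2 * v ^ r := by
    have hconv := convexOn_rpow hr
    have := hconv.2 (Set.mem_Ici.2 hu0) (Set.mem_Ici.2 hv0)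
      (by linarith : (0:ℝ) ≤ (1 + α) / 2) (by linarith : (0:ℝ) ≤ (1 - α) / 2)
      (by ring : (1 + α) / 2 + (1 - α) / 2 = 1)
    simpa [smul_eq_mul] using this
  have hmulr : u ^ r = ‖s a‖ ^ r * ‖s b‖ ^ r := Real.mul_rpow (norm_nonneg _) (norm_nonneg _)
  calc X ^ r ≤ (1 + α) / 2 * u ^ r + (1 - α) / 2 * v ^ r := le_trans step1 step2
    _ = (1 + α) / 2 * (‖s a‖ ^ r * ‖s b‖ ^ r) + (1 - α) / 2 * v ^ r := by rw [hmulr]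
end

section
/- Let H be a complex Hilbert space with positive bounded operator A. For all a, b, e ∈ H with ‖e‖_A = 1, all α ∈ [0,1] and β ≥ 0, one has |⟨a,e⟩_A ⟨e,b⟩_A|² ≤ (1/4)[ ((2β+1)(1+α²)+2α)/(1+β) · ‖a‖_A² ‖b‖_A² + ((1−α)(2+(1+α)(1+2β)))/(1+β) · ‖a‖_A ‖b‖_A |⟨a,b⟩_A| ]. -/
open scoped InnerProductSpace

variable {H : Type*} [NormedAddCommGroup H] [InnerProductSpace ℂ H] [CompleteSpace H]

/-- The arithmetic core of the inequality. -/
lemma arith4 (P N T α β : ℝ) (hP0 : 0 ≤ P) (hT0 : 0 ≤ T) (hN0 : 0 ≤ N)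
    (hbuz : P ≤ (N + T) / 2) (hPcs : P ≤ N) (hcs : T ≤ N)
    (hα0 : 0 ≤ α) (hα1 : α ≤ 1) (hβ : 0 ≤ β) :
    P ^ 2 ≤ (1 / 4) * (((2 * β + 1) * (1 + α ^ 2) + 2 * α) / (1 + β) * (N ^ 2) +
      ((1 - α) * (2 + (1 + α) * (1 + 2 * β))) / (1 + β) * (N * T)) := by
  have hβ1 : (0 : ℝ) < 1 + β := by linarith
  have hwb : 2 * P ≤ (1 + α) * N + (1 - α) * T := by nlinarith
  have hbr : (1 + β) * T ^ 2 ≤ β * N ^ 2 + N * T := by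
    have hT2 : T ^ 2 ≤ N * T := by nlinarith
    have hT3 : β * T ^ 2 ≤ β * N ^ 2 := by
      nlinarith [mul_le_mul_of_nonneg_left (mul_le_mul hcs hcs hT0 hN0) hβ]
    nlinarith
  have hmain : 4 * (1 + β) * P ^ 2 ≤
      ((2 * β + 1) * (1 + α ^ 2) + 2 * α) * N ^ 2 +
        ((1 - α) * (2 + (1 + α) * (1 + 2 * β))) * (N * T) := by
    have h3 : 4 * P ^ 2 ≤ ((1 + α) * N + (1 - α) * T) ^ 2 := by nlinarith
    have h4 : 4 * (1 + β) * P ^ 2 ≤ (1 + β) * ((1 + α) * N + (1 - α) * T) ^ 2 := by nlinarith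
    have h5 : (1 + β) * ((1 + α) * N + (1 - α) * T) ^ 2 ≤
        ((2 * β + 1) * (1 + α ^ 2) + 2 * α) * N ^ 2 +
          ((1 - α) * (2 + (1 + α) * (1 + 2 * β))) * (N * T) := by
      nlinarith [mul_le_mul_of_nonneg_left hbr (sq_nonneg (1 - α))]
    linarith
  have heq : (1 / 4 : ℝ) * (((2 * β + 1) * (1 + α ^ 2) + 2 * α) / (1 + β) * (N ^ 2) +
      ((1 - α) * (2 + (1 + α) * (1 + 2 * β))) / (1 + β) * (N * T)) =
      (((2 * β + 1) * (1 + α ^ 2) + 2 * α) * N ^ 2 +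
        ((1 - α) * (2 + (1 + α) * (1 + 2 * β))) * (N * T)) / (4 * (1 + β)) := by
    field_simp
  rw [heq, le_div_iff₀ (by positivity)]
  linarith

theorem stmt4 (A : H →L[ℂ] H) (hA : A.IsPositive) (a b e : H) (he : nA A e = 1)
    (α β : ℝ) (hα : α ∈ Set.Icc (0 : ℝ) 1) (hβ : 0 ≤ β) :
    ‖ipA A a e * ipA A e b‖ ^ 2 ≤
      (1 / 4) * (((2 * β + 1) * (1 + α ^ 2) + 2 * α) / (1 + β) * (nA A a ^ 2 * nA A b ^ 2) +
        ((1 - α) * (2 + (1 + α) * (1 + 2 * β))) / (1 + β) *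
          (nA A a * nA A b * ‖ipA A a b‖)) := by
  obtain ⟨hα0, hα1⟩ := hα
  -- Obtain the positive square root B of A
  obtain ⟨B, hBsa, hBB⟩ : ∃ B : H →L[ℂ] H, IsSelfAdjoint B ∧ B * B = A := by
    refine ⟨CFC.sqrt A, IsSelfAdjoint.of_nonneg (CFC.sqrt_nonneg (a := A)), ?_⟩
    rw [← sq, CFC.sq_sqrt A ((ContinuousLinearMap.nonneg_iff_isPositive A).mpr hA)]
  have hip : ∀ x y : H, ipA A x y = ⟪B x, B y⟫_ℂ := by
    intro x y
    rw [ipA, ← hBB]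
    have : (B * B) x = B (B x) := rfl
    rw [this, ← ContinuousLinearMap.adjoint_inner_left, hBsa.adjoint_eq]
  have hn : ∀ x : H, nA A x = ‖B x‖ := by
    intro x
    rw [nA, hip]
    rw [show (⟪B x, B x⟫_ℂ).re = RCLike.re ⟪B x, B x⟫_ℂ from rfl, @inner_self_eq_norm_sq ℂ]
    exact Real.sqrt_sq (norm_nonneg _)
  have hf : ‖B e‖ = 1 := by rw [← hn, he]
  have hPe : ‖ipA A a e * ipA A e b‖ = ‖⟪B a, B e⟫_ℂ * ⟪B e, B b⟫_ℂ‖ := by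
    rw [hip, hip]
  have hTe : ‖ipA A a b‖ = ‖⟪B a, B b⟫_ℂ‖ := by
    rw [hip]
  have hNN : nA A a ^ 2 * nA A b ^ 2 = (‖B a‖ * ‖B b‖) ^ 2 := by
    rw [hn, hn]; ring
  have hNT : nA A a * nA A b = ‖B a‖ * ‖B b‖ := by rw [hn, hn]
  rw [hPe, hTe, hNN, hNT]
  have hbuz : ‖⟪B a, B e⟫_ℂ * ⟪B e, B b⟫_ℂ‖ ≤
      (‖B a‖ * ‖B b‖ + ‖⟪B a, B b⟫_ℂ‖) / 2 := buzano_aux (B a) (B b) (B e) hf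
  have hPcs : ‖⟪B a, B e⟫_ℂ * ⟪B e, B b⟫_ℂ‖ ≤ ‖B a‖ * ‖B b‖ := by
    rw [norm_mul]
    calc ‖⟪B a, B e⟫_ℂ‖ * ‖⟪B e, B b⟫_ℂ‖ ≤ (‖B a‖ * ‖B e‖) * (‖B e‖ * ‖B b‖) :=
          mul_le_mul (norm_inner_le_norm _ _) (norm_inner_le_norm _ _) (norm_nonneg _)
            (mul_nonneg (norm_nonneg _) (norm_nonneg _))
      _ = ‖B a‖ * ‖B b‖ := by rw [hf]; ring
  exact arith4 _ _ _ α β (norm_nonneg _) (norm_nonneg _)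
    (mul_nonneg (norm_nonneg _) (norm_nonneg _)) hbuz hPcs
    (norm_inner_le_norm _ _) hα0 hα1 hβ
end

section
/- Let H be a complex Hilbert space with positive bounded operator A. For all a, b, e ∈ H with ‖e‖_A = 1, all α ∈ [0,1], β ≥ 0 and real r ≥ 1, one has |⟨a,e⟩_A ⟨e,b⟩_A|^{2r} ≤ ((1+α+2β)/(2(1+β))) ‖a‖_A^{2r} ‖b‖_A^{2r} + ((1−α)/(2(1+β))) |⟨a,b⟩_A|^{2r}. -/
open scoped InnerProductSpace

variable {H : Type*} [NormedAddCommGroup H] [InnerProductSpace ℂ H] [CompleteSpace H]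

namespace StmtAux

variable (A : H →L[ℂ] H)

lemma ipA_conj (hA : A.IsPositive) (x y : H) : (starRingEnd ℂ) (ipA A x y) = ipA A y x := by
  have h := hA.isSelfAdjoint
  rw [ContinuousLinearMap.isSelfAdjoint_iff'] at h
  have h2 : ⟪A y, x⟫_ℂ = ⟪y, A x⟫_ℂ := by
    rw [← ContinuousLinearMap.adjoint_inner_left, h]
  rw [ipA, ipA, inner_conj_symm, h2]

lemma ipA_add_right (x y z : H) : ipA A x (y + z) = ipA A x y + ipA A x z := by
  simp [ipA, inner_add_right]

lemma ipA_sub_right (x y z : H) : ipA A x (y - z) = ipA A x y - ipA A x z := by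
  simp [ipA, inner_sub_right]

lemma ipA_smul_right (x y : H) (c : ℂ) : ipA A x (c • y) = c * ipA A x y := by
  simp [ipA, inner_smul_right]

lemma ipA_sub_left (x y z : H) : ipA A (x - y) z = ipA A x z - ipA A y z := by
  simp [ipA, inner_sub_left]

lemma ipA_smul_left (x y : H) (c : ℂ) : ipA A (c • x) y = (starRingEnd ℂ) c * ipA A x y := by
  simp [ipA, inner_smul_left]; ring

lemma ipA_self_re_nonneg (hA : A.IsPositive) (x : H) : 0 ≤ (ipA A x x).re :=
  hA.re_inner_nonneg_left x

lemma nA_nonneg (x : H) : 0 ≤ nA A x := Real.sqrt_nonneg _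

lemma nA_sq (hA : A.IsPositive) (x : H) : nA A x ^ 2 = (ipA A x x).re := by
  rw [nA, Real.sq_sqrt (ipA_self_re_nonneg A hA x)]

/-- The pre-inner-product-space core given by a positive operator. -/
noncomputable def core (hA : A.IsPositive) : PreInnerProductSpace.Core ℂ H where
  inner := ipA A
  conj_inner_symm x y := ipA_conj A hA y x
  re_inner_nonneg x := ipA_self_re_nonneg A hA x
  add_left x y z := by simp [ipA, inner_add_left]
  smul_left x y c := ipA_smul_left A x y c

/-- Cauchy–Schwarz for the semi-inner product. -/
lemma cs (hA : A.IsPositive) (x y : H) : ‖ipA A x y‖ ≤ nA A x * nA A y := by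
  have h := InnerProductSpace.Core.inner_mul_inner_self_le (𝕜 := ℂ) (F := H)
    (c := core A hA) x y
  replace h : ‖ipA A x y‖ * ‖ipA A y x‖ ≤ (ipA A x x).re * (ipA A y y).re := h
  have habs : ‖ipA A y x‖ = ‖ipA A x y‖ := by
    rw [← ipA_conj A hA x y]; exact RCLike.norm_conj _
  rw [habs] at h
  have h1 : ‖ipA A x y‖ * ‖ipA A x y‖ ≤
      (nA A x * nA A y) * (nA A x * nA A y) := by
    have := h
    calc ‖ipA A x y‖ * ‖ipA A x y‖
        ≤ (ipA A x x).re * (ipA A y y).re := this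
      _ = (nA A x * nA A y) * (nA A x * nA A y) := by
          rw [← nA_sq A hA x, ← nA_sq A hA y]; ring
  nlinarith [norm_nonneg (ipA A x y), mul_nonneg (nA_nonneg A x) (nA_nonneg A y)]

lemma ipA_ee (hA : A.IsPositive) (e : H) (he : nA A e = 1) : ipA A e e = 1 := by
  have hre : (ipA A e e).re = 1 := by
    have h0 := ipA_self_re_nonneg A hA e
    have : Real.sqrt (ipA A e e).re = 1 := he
    nlinarith [Real.sq_sqrt h0, this]
  have him : (ipA A e e).im = 0 := by
    have h := ipA_conj A hA e e
    have := congrArg Complex.im h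
    simp [Complex.conj_im] at this
    linarith
  exact Complex.ext hre him

lemma buzano (hA : A.IsPositive) (a b e : H) (he : nA A e = 1) :
    ‖2 * (ipA A a e * ipA A e b) - ipA A a b‖ ≤ nA A a * nA A b := by
  set t := ipA A e b with ht
  set c := (2 * t) • e - b with hc
  have h1 : ipA A a c = 2 * (ipA A a e * ipA A e b) - ipA A a b := by
    rw [hc, ipA_sub_right, ipA_smul_right, ← ht]; ring
  have h2 : ipA A c c = ipA A b b := by
    have hbe : ipA A b e = (starRingEnd ℂ) t := by rw [← ipA_conj A hA e b, ht]
    simp only [hc, ipA_sub_right, ipA_sub_left, ipA_smul_right, ipA_smul_left,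
      ipA_ee A hA e he, hbe, ← ht, map_mul, Complex.conj_ofNat]
    ring
  have hnc : nA A c = nA A b := by
    rw [nA, nA, h2]
  calc ‖2 * (ipA A a e * ipA A e b) - ipA A a b‖
      = ‖ipA A a c‖ := by rw [h1]
    _ ≤ nA A a * nA A c := cs A hA a c
    _ = nA A a * nA A b := by rw [hnc]

end StmtAux

theorem stmt5 (A : H →L[ℂ] H) (hA : A.IsPositive) (a b e : H) (he : nA A e = 1)
    (α β r : ℝ) (hα : α ∈ Set.Icc (0 : ℝ) 1) (hβ : 0 ≤ β) (hr : 1 ≤ r) :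
    ‖ipA A a e * ipA A e b‖ ^ (2 * r) ≤
      ((1 + α + 2 * β) / (2 * (1 + β))) * (nA A a ^ (2 * r) * nA A b ^ (2 * r)) +
        ((1 - α) / (2 * (1 + β))) * ‖ipA A a b‖ ^ (2 * r) := by
  open StmtAux in
  obtain ⟨hα0, hα1⟩ := hα
  set N : ℝ := nA A a * nA A b with hN
  set M : ℝ := ‖ipA A a b‖ with hM
  set P : ℝ := ‖ipA A a e * ipA A e b‖ with hP
  have hN0 : 0 ≤ N := mul_nonneg (nA_nonneg A a) (nA_nonneg A b)
  have hM0 : 0 ≤ M := norm_nonneg _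
  have hP0 : 0 ≤ P := norm_nonneg _
  have hMN : M ≤ N := cs A hA a b
  have hbuz : 2 * P ≤ N + M := by
    have h := buzano A hA a b e he
    have h2 : ‖2 * (ipA A a e * ipA A e b)‖ -
        ‖ipA A a b‖ ≤ ‖2 * (ipA A a e * ipA A e b) - ipA A a b‖ := by
      simpa using
        norm_sub_norm_le (2 * (ipA A a e * ipA A e b)) (ipA A a b)
    have h3 : ‖2 * (ipA A a e * ipA A e b)‖ = 2 * P := by
      rw [norm_mul, hP]; simp
    rw [h3] at h2
    rw [← hM] at h2
    linarith
  set p : ℝ := 2 * r with hp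
  have hp1 : (1 : ℝ) ≤ p := by rw [hp]; linarith
  have h1 : P ^ p ≤ ((N + M) / 2) ^ p :=
    Real.rpow_le_rpow hP0 (by linarith) (by linarith)
  have h2 : ((N + M) / 2) ^ p ≤ (N ^ p + M ^ p) / 2 := by
    have h := Real.rpow_arith_mean_le_arith_mean_rpow Finset.univ ![1/2, 1/2] ![N, M]
      (by intro i _; fin_cases i <;> norm_num)
      (by simp [Fin.sum_univ_succ]; norm_num)
      (by intro i _; fin_cases i <;> simpa) hp1
    simp only [Fin.sum_univ_succ, Fin.sum_univ_zero, Matrix.cons_val_zero,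
      Matrix.cons_val_one, Matrix.head_cons, add_zero] at h
    calc ((N + M) / 2) ^ p = (1/2 * N + 1/2 * M) ^ p := by ring_nf
      _ ≤ 1/2 * N ^ p + 1/2 * M ^ p := h
      _ = (N ^ p + M ^ p) / 2 := by ring
  have h3 : M ^ p ≤ N ^ p := Real.rpow_le_rpow hM0 hMN (by linarith)
  have hNab : nA A a ^ p * nA A b ^ p = N ^ p := by
    rw [hN, Real.mul_rpow (nA_nonneg A a) (nA_nonneg A b)]
  rw [hNab]
  have hβ1 : (0 : ℝ) < 1 + β := by linarith
  set d : ℝ := (α + β) / (2 * (1 + β)) with hd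
  have hd0 : 0 ≤ d := by rw [hd]; positivity
  have e1 : (1 + α + 2 * β) / (2 * (1 + β)) = 1/2 + d := by
    rw [hd]; field_simp
    try ring
  have e2 : (1 - α) / (2 * (1 + β)) = 1/2 - d := by
    rw [hd]; field_simp
    try ring

  rw [e1, e2]
  have hprod : 0 ≤ d * (N ^ p - M ^ p) := mul_nonneg hd0 (by linarith)
  nlinarith [h1, h2, hprod]
end

section
/- Let H be a complex Hilbert space with positive bounded operator A. For all x, y, z ∈ H, one has |⟨x,z⟩_A|² + |⟨y,z⟩_A|² ≤ ‖z‖_A² ( max{‖x‖_A², ‖y‖_A²} + |⟨x,y⟩_A| ). -/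
open scoped InnerProductSpace

variable {H : Type*} [NormedAddCommGroup H] [InnerProductSpace ℂ H] [CompleteSpace H]

noncomputable def coreA (A : H →L[ℂ] H) (hA : A.IsPositive) :
    PreInnerProductSpace.Core ℂ H where
  inner x y := ipA A x y
  conj_inner_symm x y := by
    have hs := (ContinuousLinearMap.isSelfAdjoint_iff_isSymmetric.mp hA.isSelfAdjoint)
    simp only [ipA]
    rw [inner_conj_symm]
    exact (hs x y).symm
  re_inner_nonneg x := hA.re_inner_nonneg_left x
  add_left x y z := by simp [ipA, inner_add_left]
  smul_left x y r := by simp [ipA, inner_smul_left]; ring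

lemma ipA_conj (A : H →L[ℂ] H) (hA : A.IsPositive) (x y : H) :
    (starRingEnd ℂ) (ipA A y x) = ipA A x y := (coreA A hA).conj_inner_symm x y

lemma csA (A : H →L[ℂ] H) (hA : A.IsPositive) (x y : H) :
    ‖ipA A x y‖ * ‖ipA A y x‖ ≤ (ipA A x x).re * (ipA A y y).re :=
  @InnerProductSpace.Core.inner_mul_inner_self_le ℂ H _ _ _ (coreA A hA) x y

theorem stmt6 (A : H →L[ℂ] H) (hA : A.IsPositive) (x y z : H) :
    ‖ipA A x z‖ ^ 2 + ‖ipA A y z‖ ^ 2 ≤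
      nA A z ^ 2 * (max (nA A x ^ 2) (nA A y ^ 2) + ‖ipA A x y‖) := by
  set a : ℂ := ipA A x z with ha
  set b : ℂ := ipA A y z with hb
  set u : H := a • x + b • y with hu
  set S : ℝ := ‖a‖ ^ 2 + ‖b‖ ^ 2 with hS
  have hSnn : 0 ≤ S := by positivity
  have hznn : 0 ≤ (ipA A z z).re := hA.re_inner_nonneg_left z
  have hxnn : 0 ≤ (ipA A x x).re := hA.re_inner_nonneg_left x
  have hynn : 0 ≤ (ipA A y y).re := hA.re_inner_nonneg_left y
  have hnz : nA A z ^ 2 = (ipA A z z).re := Real.sq_sqrt hznn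
  have hnx : nA A x ^ 2 = (ipA A x x).re := Real.sq_sqrt hxnn
  have hny : nA A y ^ 2 = (ipA A y y).re := Real.sq_sqrt hynn
  have hconja : (starRingEnd ℂ) a * a = ((‖a‖ : ℂ)) ^ 2 := RCLike.conj_mul a
  have hconjb : (starRingEnd ℂ) b * b = ((‖b‖ : ℂ)) ^ 2 := RCLike.conj_mul b
  -- ipA A u z = S
  have huz : ipA A u z = (S : ℂ) := by
    simp only [hu, ipA, map_add, map_smul, inner_add_left, inner_smul_left]
    rw [show (⟪A x, z⟫_ℂ : ℂ) = a from rfl, show (⟪A y, z⟫_ℂ : ℂ) = b from rfl,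
      hconja, hconjb, hS]
    push_cast
    ring
  have hzu : ipA A z u = (S : ℂ) := by
    have h := ipA_conj A hA u z
    rw [huz] at h
    have h2 := congrArg (starRingEnd ℂ) h
    simpa using h2
  -- expansion of ipA A u u
  have hyx : ipA A y x = (starRingEnd ℂ) (ipA A x y) := (ipA_conj A hA y x).symm
  have hw : ipA A u u = ((‖a‖ : ℂ)) ^ 2 * ipA A x x + ((‖b‖ : ℂ)) ^ 2 * ipA A y y
      + ((starRingEnd ℂ) a * b * ipA A x y
        + (starRingEnd ℂ) ((starRingEnd ℂ) a * b * ipA A x y)) := by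
    simp only [hu, ipA, map_add, map_smul, inner_add_left, inner_add_right,
      inner_smul_left, inner_smul_right]
    rw [show (⟪A y, x⟫_ℂ : ℂ) = (starRingEnd ℂ) (⟪A x, y⟫_ℂ) from hyx,
      ← hconja, ← hconjb]
    simp only [map_mul, Complex.conj_conj]
    ring
  have huu : (ipA A u u).re =
      ‖a‖ ^ 2 * (ipA A x x).re + ‖b‖ ^ 2 * (ipA A y y).re
        + 2 * ((starRingEnd ℂ) a * b * ipA A x y).re := by
    rw [hw]
    simp only [Complex.add_re, ← Complex.ofReal_pow, Complex.re_ofReal_mul,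
      Complex.conj_re]
    ring
  -- bound on re ipA u u
  have hcross : ((starRingEnd ℂ) a * b * ipA A x y).re ≤ ‖a‖ * ‖b‖ * ‖ipA A x y‖ := by
    calc ((starRingEnd ℂ) a * b * ipA A x y).re ≤ ‖(starRingEnd ℂ) a * b * ipA A x y‖ :=
          Complex.re_le_norm _
      _ = ‖a‖ * ‖b‖ * ‖ipA A x y‖ := by simp [norm_mul]
  have hM : (ipA A x x).re ≤ max (nA A x ^ 2) (nA A y ^ 2) := hnx ▸ le_max_left _ _
  have hM' : (ipA A y y).re ≤ max (nA A x ^ 2) (nA A y ^ 2) := hny ▸ le_max_right _ _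
  have h2ab : 2 * (‖a‖ * ‖b‖) ≤ S := by nlinarith [sq_nonneg (‖a‖ - ‖b‖)]
  have huu_le : (ipA A u u).re ≤ S * (max (nA A x ^ 2) (nA A y ^ 2) + ‖ipA A x y‖) := by
    rw [huu]
    have h1 : ‖a‖ ^ 2 * (ipA A x x).re ≤ ‖a‖ ^ 2 * max (nA A x ^ 2) (nA A y ^ 2) :=
      mul_le_mul_of_nonneg_left hM (by positivity)
    have h2 : ‖b‖ ^ 2 * (ipA A y y).re ≤ ‖b‖ ^ 2 * max (nA A x ^ 2) (nA A y ^ 2) :=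
      mul_le_mul_of_nonneg_left hM' (by positivity)
    nlinarith [norm_nonneg (ipA A x y)]
  -- Cauchy-Schwarz
  have hcs : S * S ≤ (ipA A u u).re * (ipA A z z).re := by
    have := csA A hA u z
    rwa [huz, hzu, Complex.norm_real, Real.norm_of_nonneg hSnn] at this
  have key : S * S ≤ (nA A z ^ 2 * (max (nA A x ^ 2) (nA A y ^ 2) + ‖ipA A x y‖)) * S := by
    calc S * S ≤ (ipA A u u).re * (ipA A z z).re := hcs
      _ ≤ (S * (max (nA A x ^ 2) (nA A y ^ 2) + ‖ipA A x y‖)) * (ipA A z z).re :=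
          mul_le_mul_of_nonneg_right huu_le hznn
      _ = (nA A z ^ 2 * (max (nA A x ^ 2) (nA A y ^ 2) + ‖ipA A x y‖)) * S := by
          rw [hnz]; ring
  have final : S ≤ nA A z ^ 2 * (max (nA A x ^ 2) (nA A y ^ 2) + ‖ipA A x y‖) := by
    rcases eq_or_lt_of_le hSnn with h | h
    · rw [← h]
      have h3 : 0 ≤ ‖ipA A x y‖ := norm_nonneg _
      have h4 : (0:ℝ) ≤ max (nA A x ^ 2) (nA A y ^ 2) := le_max_of_le_left (by positivity)
      have h5 : (0:ℝ) ≤ nA A z ^ 2 := by positivity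
      positivity
    · exact le_of_mul_le_mul_right (by linarith [key]) h
  simpa [hS] using final
end

section
/- Let H be a complex Hilbert space, A a positive bounded operator, and T, S bounded operators admitting A-adjoints T^♯, S^♯. Then w_A(S^♯S T^♯T) ≤ (1/2) ‖(T^♯T)² + (S^♯S)²‖_A, where w_A(R) = sup{|⟨Rx,x⟩_A| : ‖x‖_A = 1} and ‖R‖_A = sup{‖Rx‖_A : ‖x‖_A = 1}. -/
open scoped InnerProductSpace

variable {H : Type*} [NormedAddCommGroup H] [InnerProductSpace ℂ H] [CompleteSpace H]

/-- The `A`-numerical radius. -/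
noncomputable def wA (A T : H →L[ℂ] H) : ℝ :=
  sSup {c : ℝ | ∃ x : H, nA A x = 1 ∧ c = ‖ipA A (T x) x‖}

/-- The `A`-operator seminorm. -/
noncomputable def opA (A T : H →L[ℂ] H) : ℝ :=
  sSup {c : ℝ | ∃ x : H, nA A x = 1 ∧ c = nA A (T x)}

namespace Stmt11Aux

open ComplexConjugate

set_option linter.unusedSectionVars false

lemma ipA_conj {A : H →L[ℂ] H} (hA : A.IsPositive) (x y : H) :
    ipA A x y = conj (ipA A y x) := by
  have hsa : ContinuousLinearMap.adjoint A = A := ContinuousLinearMap.isSelfAdjoint_iff'.mp hA.isSelfAdjoint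
  calc ipA A x y = ⟪x, (ContinuousLinearMap.adjoint A) y⟫_ℂ :=
        (ContinuousLinearMap.adjoint_inner_right A x y).symm
    _ = ⟪x, A y⟫_ℂ := by rw [hsa]
    _ = conj ⟪A y, x⟫_ℂ := (inner_conj_symm x (A y)).symm
    _ = conj (ipA A y x) := rfl

/-- The `A`-semi inner product as a `PreInnerProductSpace.Core`. -/
noncomputable def coreA (A : H →L[ℂ] H) (hA : A.IsPositive) : PreInnerProductSpace.Core ℂ H where
  inner x y := ipA A x y
  conj_inner_symm x y := (ipA_conj hA x y).symm
  re_inner_nonneg x := hA.re_inner_nonneg_left x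
  add_left x y z := show ipA A (x + y) z = ipA A x z + ipA A y z by
    simp only [ipA, map_add, inner_add_left]
  smul_left x y r := show ipA A (r • x) y = conj r * ipA A x y by
    simp only [ipA, map_smul, inner_smul_left]

lemma nA_nonneg (A : H →L[ℂ] H) (x : H) : 0 ≤ nA A x := Real.sqrt_nonneg _

lemma ipA_re_nonneg {A : H →L[ℂ] H} (hA : A.IsPositive) (x : H) : 0 ≤ (ipA A x x).re :=
  hA.re_inner_nonneg_left x

lemma nA_sq {A : H →L[ℂ] H} (hA : A.IsPositive) (x : H) :
    nA A x ^ 2 = (ipA A x x).re := by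
  rw [nA, Real.sq_sqrt]
  exact ipA_re_nonneg hA x

/-- Cauchy–Schwarz for the `A`-semi inner product. -/
lemma csA {A : H →L[ℂ] H} (hA : A.IsPositive) (x y : H) :
    ‖ipA A x y‖ ≤ nA A x * nA A y := by
  have key : ‖ipA A x y‖ ^ 2 ≤ (ipA A x x).re * (ipA A y y).re := by
    have h := @InnerProductSpace.Core.inner_mul_inner_self_le ℂ H _ _ _ (coreA A hA) x y
    change ‖ipA A x y‖ * ‖ipA A y x‖ ≤ (ipA A x x).re * (ipA A y y).re at h
    have habs : ‖ipA A y x‖ = ‖ipA A x y‖ := by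
      rw [ipA_conj hA x y, RCLike.norm_conj]
    rwa [habs, ← sq] at h
  have habs : ‖ipA A x y‖ = ‖ipA A x y‖ := rfl
  rw [habs]
  calc ‖ipA A x y‖ = Real.sqrt (‖ipA A x y‖ ^ 2) := (Real.sqrt_sq (norm_nonneg _)).symm
    _ ≤ Real.sqrt ((ipA A x x).re * (ipA A y y).re) := Real.sqrt_le_sqrt key
    _ = Real.sqrt (ipA A x x).re * Real.sqrt (ipA A y y).re :=
        Real.sqrt_mul (ipA_re_nonneg hA x) _
    _ = nA A x * nA A y := rfl

lemma nA_le_norm {A : H →L[ℂ] H} (hA : A.IsPositive) (y : H) :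
    nA A y ≤ Real.sqrt ‖A‖ * ‖y‖ := by
  have h1 : (ipA A y y).re ≤ ‖A‖ * ‖y‖ ^ 2 := by
    have h0 : (ipA A y y).re ≤ ‖ipA A y y‖ := Complex.re_le_norm _
    refine h0.trans ?_
    unfold ipA
    calc ‖⟪A y, y⟫_ℂ‖ ≤ ‖A y‖ * ‖y‖ := norm_inner_le_norm _ _
      _ ≤ ‖A‖ * ‖y‖ * ‖y‖ := by
          have := A.le_opNorm y
          nlinarith [norm_nonneg y, norm_nonneg (A y)]
      _ = ‖A‖ * ‖y‖ ^ 2 := by ring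
  calc nA A y = Real.sqrt (ipA A y y).re := rfl
    _ ≤ Real.sqrt (‖A‖ * ‖y‖ ^ 2) := Real.sqrt_le_sqrt h1
    _ = Real.sqrt ‖A‖ * ‖y‖ := by
        rw [Real.sqrt_mul (norm_nonneg A), Real.sqrt_sq (norm_nonneg y)]

section selfadj

variable {A B : H →L[ℂ] H} (hA : A.IsPositive)
  (hadjB : ∀ x y : H, ipA A (B x) y = ipA A x (B y))

include hadjB in
lemma pow_adj : ∀ (n : ℕ) (x y : H), ipA A ((B ^ n) x) y = ipA A x ((B ^ n) y) := by
  intro n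
  induction n with
  | zero => intro x y; simp
  | succ k ih =>
      intro x y
      have hl : (B ^ (k + 1)) x = (B ^ k) (B x) := by
        rw [pow_succ]; rfl
      have hr : (B ^ (k + 1)) y = B ((B ^ k) y) := by
        rw [pow_succ']; rfl
      rw [hl, hr, ih, hadjB]

include hA hadjB in
/-- An `A`-selfadjoint operator is `A`-bounded with constant `‖B‖` on the `A`-unit sphere. -/
lemma key_bound (x : H) (hx : nA A x = 1) : nA A (B x) ≤ ‖B‖ := by
  set a : ℕ → ℝ := fun n => nA A ((B ^ n) x) with ha
  have ha1 : nA A (B x) = a 1 := by rw [ha]; simp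
  rw [ha1]
  have hstep : ∀ m : ℕ, a m ^ 2 ≤ a (2 * m) := by
    intro m
    have h2m : (B ^ (2 * m)) x = (B ^ m) ((B ^ m) x) := by
      rw [two_mul, pow_add]; rfl
    have h1 : ipA A ((B ^ m) x) ((B ^ m) x) = ipA A ((B ^ (2 * m)) x) x := by
      rw [h2m]
      exact (pow_adj hadjB m ((B ^ m) x) x).symm
    have h2 : a m ^ 2 = (ipA A ((B ^ m) x) ((B ^ m) x)).re := nA_sq hA _
    rw [h2, h1]
    calc (ipA A ((B ^ (2 * m)) x) x).re ≤ ‖ipA A ((B ^ (2 * m)) x) x‖ :=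
          Complex.re_le_norm _
      _ ≤ nA A ((B ^ (2 * m)) x) * nA A x := csA hA _ _
      _ = a (2 * m) := by rw [hx, mul_one]
  have hanonneg : ∀ n, 0 ≤ a n := fun n => nA_nonneg A _
  have hchain : ∀ k : ℕ, a 1 ^ (2 ^ k) ≤ a (2 ^ k) := by
    intro k
    induction k with
    | zero => simp
    | succ j ih =>
        have h1 : a 1 ^ 2 ^ (j + 1) = (a 1 ^ 2 ^ j) ^ 2 := by
          rw [← pow_mul, pow_succ]
        rw [h1]
        have h2 : (a 1 ^ 2 ^ j) ^ 2 ≤ a (2 ^ j) ^ 2 :=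
          pow_le_pow_left₀ (pow_nonneg (hanonneg 1) _) ih 2
        refine h2.trans ?_
        have h3 := hstep (2 ^ j)
        rwa [show 2 * 2 ^ j = 2 ^ (j + 1) by ring] at h3
  set C : ℝ := Real.sqrt ‖A‖ * ‖x‖ with hC
  have hCnn : 0 ≤ C := by positivity
  have hfinal : ∀ k : ℕ, a 1 ^ (2 ^ k) ≤ C * ‖B‖ ^ (2 ^ k) := by
    intro k
    refine (hchain k).trans ?_
    calc a (2 ^ k) ≤ Real.sqrt ‖A‖ * ‖(B ^ 2 ^ k) x‖ := nA_le_norm hA _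
      _ ≤ Real.sqrt ‖A‖ * (‖B ^ 2 ^ k‖ * ‖x‖) := by
          gcongr
          exact ContinuousLinearMap.le_opNorm _ _
      _ ≤ Real.sqrt ‖A‖ * (‖B‖ ^ 2 ^ k * ‖x‖) := by
          gcongr
          exact norm_pow_le' _ (by positivity)
      _ = C * ‖B‖ ^ 2 ^ k := by ring
  -- conclude a 1 ≤ ‖B‖
  by_contra hcon
  push_neg at hcon
  have hBnn : (0:ℝ) ≤ ‖B‖ := norm_nonneg _
  have ha1pos : 0 < a 1 := lt_of_le_of_lt hBnn hcon
  rcases eq_or_lt_of_le hBnn with hB0 | hBpos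
  · -- ‖B‖ = 0
    have h2 := hfinal 1
    rw [← hB0] at h2
    norm_num at h2
    nlinarith [h2, ha1pos]
  · have hr : 1 < a 1 / ‖B‖ := (one_lt_div hBpos).mpr hcon
    obtain ⟨n, hn⟩ := pow_unbounded_of_one_lt C hr
    have hmono : (a 1 / ‖B‖) ^ n ≤ (a 1 / ‖B‖) ^ (2 ^ n) :=
      pow_le_pow_right₀ hr.le (Nat.le_of_lt (Nat.lt_two_pow_self))
    have h2 : (a 1 / ‖B‖) ^ (2 ^ n) ≤ C := by
      rw [div_pow, div_le_iff₀ (pow_pos hBpos _)]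
      exact hfinal n
    linarith [hn.trans_le (hmono.trans h2)]

end selfadj

end Stmt11Aux

open Stmt11Aux in
theorem stmt11 (A : H →L[ℂ] H) (hA : A.IsPositive) (T Ts S Ss : H →L[ℂ] H)
    (hadjT : ∀ x y : H, ipA A (T x) y = ipA A x (Ts y))
    (hadjS : ∀ x y : H, ipA A (S x) y = ipA A x (Ss y)) :
    wA A ((Ss ∘L S) ∘L (Ts ∘L T)) ≤
      (1 / 2) * opA A ((Ts ∘L T) ∘L (Ts ∘L T) + (Ss ∘L S) ∘L (Ss ∘L S)) := by
  classical
  set P : H →L[ℂ] H := Ts ∘L T with hP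
  set Q : H →L[ℂ] H := Ss ∘L S with hQ
  set R : H →L[ℂ] H := P ∘L P + Q ∘L Q with hR
  -- adjoint transfer lemmas
  have hTs : ∀ x y : H, ipA A (Ts x) y = ipA A x (T y) := by
    intro x y
    rw [ipA_conj hA, ← hadjT, ← ipA_conj hA]
  have hSs : ∀ x y : H, ipA A (Ss x) y = ipA A x (S y) := by
    intro x y
    rw [ipA_conj hA, ← hadjS, ← ipA_conj hA]
  have hadjP : ∀ x y : H, ipA A (P x) y = ipA A x (P y) := by
    intro x y
    show ipA A (Ts (T x)) y = ipA A x (Ts (T y))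
    rw [hTs, hadjT]
  have hadjQ : ∀ x y : H, ipA A (Q x) y = ipA A x (Q y) := by
    intro x y
    show ipA A (Ss (S x)) y = ipA A x (Ss (S y))
    rw [hSs, hadjS]
  have hRapp : ∀ x : H, R x = P (P x) + Q (Q x) := fun x => rfl
  have hadjR : ∀ x y : H, ipA A (R x) y = ipA A x (R y) := by
    intro x y
    have e1 : ipA A (R x) y = ipA A (P (P x)) y + ipA A (Q (Q x)) y := by
      rw [hRapp]
      show ⟪A (P (P x) + Q (Q x)), y⟫_ℂ = _
      rw [map_add, inner_add_left]; rfl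
    have e2 : ipA A x (R y) = ipA A x (P (P y)) + ipA A x (Q (Q y)) := by
      rw [hRapp]
      show ⟪A x, P (P y) + Q (Q y)⟫_ℂ = _
      rw [inner_add_right]; rfl
    rw [e1, e2, hadjP (P x) y, hadjP x (P y), hadjQ (Q x) y, hadjQ x (Q y)]
  -- boundedness of the opA defining set for R
  have hbdd : BddAbove {c : ℝ | ∃ x : H, nA A x = 1 ∧ c = nA A (R x)} := by
    refine ⟨‖R‖, ?_⟩
    rintro c ⟨x, hx, rfl⟩
    exact key_bound hA hadjR x hx
  -- the key pointwise estimate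
  have hmain : ∀ x : H, nA A x = 1 →
      ‖ipA A (((Ss ∘L S) ∘L (Ts ∘L T)) x) x‖ ≤ (1 / 2) * opA A R := by
    intro x hx
    have heq : ipA A (((Ss ∘L S) ∘L (Ts ∘L T)) x) x = ipA A (P x) (Q x) := by
      show ipA A (Q (P x)) x = ipA A (P x) (Q x)
      exact hadjQ (P x) x
    rw [heq]
    have e1 : nA A (P x) ^ 2 = (ipA A (P (P x)) x).re := by
      rw [nA_sq hA]
      exact congrArg Complex.re (hadjP (P x) x).symm
    have e2 : nA A (Q x) ^ 2 = (ipA A (Q (Q x)) x).re := by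
      rw [nA_sq hA]
      exact congrArg Complex.re (hadjQ (Q x) x).symm
    have hsum : ipA A (R x) x = ipA A (P (P x)) x + ipA A (Q (Q x)) x := by
      rw [hRapp]
      show ⟪A (P (P x) + Q (Q x)), x⟫_ℂ = _
      rw [map_add, inner_add_left]; rfl
    have hPQ : nA A (P x) ^ 2 + nA A (Q x) ^ 2 = (ipA A (R x) x).re := by
      rw [e1, e2, hsum, Complex.add_re]
    have hRx : (ipA A (R x) x).re ≤ nA A (R x) := by
      calc (ipA A (R x) x).re ≤ ‖ipA A (R x) x‖ := Complex.re_le_norm _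
        _ ≤ nA A (R x) * nA A x := csA hA _ _
        _ = nA A (R x) := by rw [hx, mul_one]
    have hop : nA A (R x) ≤ opA A R := le_csSup hbdd ⟨x, hx, rfl⟩
    have hcs : ‖ipA A (P x) (Q x)‖ ≤ nA A (P x) * nA A (Q x) := csA hA _ _
    nlinarith [nA_nonneg A (P x), nA_nonneg A (Q x), sq_nonneg (nA A (P x) - nA A (Q x))]
  -- opA ≥ 0
  have hopnn : 0 ≤ opA A R := by
    apply Real.sSup_nonneg
    rintro c ⟨x, hx, rfl⟩
    exact nA_nonneg A _
  apply Real.sSup_le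
  · rintro c ⟨x, hx, rfl⟩
    exact hmain x hx
  · positivity
end

section
/- Let H be a complex Hilbert space, A a positive bounded operator, and T, S bounded operators admitting A-adjoints. Then ‖T + S‖_A² ≤ (1/2)( ‖T^♯T + S^♯S‖_A + ‖T^♯T − S^♯S‖_A ) + ‖T‖_A ‖S‖_A + 2 w_A(S^♯T), where ‖R‖_A = sup{‖Rx‖_A : ‖x‖_A = 1} and w_A(R) = sup{|⟨Rx,x⟩_A| : ‖x‖_A = 1}. -/
set_option synthInstance.maxHeartbeats 1000000
set_option maxHeartbeats 1000000

open scoped InnerProductSpace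

variable {H : Type*} [NormedAddCommGroup H] [InnerProductSpace ℂ H] [CompleteSpace H]

lemma nA_nonneg (A : H →L[ℂ] H) (x : H) : 0 ≤ nA A x := Real.sqrt_nonneg _

/-- Key iteration lemma: if `C` is `A`-selfadjoint (expressed via `B` with `B*B = A`),
then `‖B (C x)‖ ≤ ‖C‖` whenever `‖B x‖ = 1`. -/
lemma key_bound (B C : H →L[ℂ] H)
    (hC : ∀ x y : H, ⟪B (C x), B y⟫_ℂ = ⟪B x, B (C y)⟫_ℂ)
    {x : H} (hx : ‖B x‖ = 1) : ‖B (C x)‖ ≤ ‖C‖ := by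
  have hCpow : ∀ (j : ℕ) (u v : H), ⟪B ((C ^ j) u), B v⟫_ℂ = ⟪B u, B ((C ^ j) v)⟫_ℂ := by
    intro j
    induction j with
    | zero => intro u v; simp
    | succ j ih =>
      intro u v
      have hcomm : C ((C ^ j) v) = (C ^ j) (C v) := by
        rw [← ContinuousLinearMap.mul_apply, ← pow_succ', pow_succ,
          ContinuousLinearMap.mul_apply]
      rw [pow_succ, ContinuousLinearMap.mul_apply, ContinuousLinearMap.mul_apply,
        ih (C u) v, hC u ((C ^ j) v), hcomm]
  set g : ℕ → ℝ := fun n => ‖B ((C ^ (2 ^ n)) x)‖ with hg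
  have step : ∀ n, g n ^ 2 ≤ g (n + 1) := by
    intro n
    have h1 : g n ^ 2 = RCLike.re ⟪B ((C ^ (2 ^ n)) x), B ((C ^ (2 ^ n)) x)⟫_ℂ :=
      (inner_self_eq_norm_sq _).symm
    have h2 : (C ^ (2 ^ n)) ((C ^ (2 ^ n)) x) = (C ^ (2 ^ (n + 1))) x := by
      rw [← ContinuousLinearMap.mul_apply, ← pow_add]
      congr 1
      rw [pow_succ, Nat.mul_two]
    rw [h1, hCpow (2 ^ n) x ((C ^ (2 ^ n)) x)]
    calc RCLike.re ⟪B x, B ((C ^ (2 ^ n)) ((C ^ (2 ^ n)) x))⟫_ℂ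
        ≤ ‖(⟪B x, B ((C ^ (2 ^ n)) ((C ^ (2 ^ n)) x))⟫_ℂ : ℂ)‖ := RCLike.re_le_norm _
      _ ≤ ‖B x‖ * ‖B ((C ^ (2 ^ n)) ((C ^ (2 ^ n)) x))‖ := norm_inner_le_norm _ _
      _ = g (n + 1) := by rw [h2, hx, one_mul]
  have iter : ∀ n, g 0 ^ (2 ^ n) ≤ g n := by
    intro n
    induction n with
    | zero => simp
    | succ n ih =>
      have h3 : g 0 ^ (2 ^ (n + 1)) = (g 0 ^ (2 ^ n)) ^ 2 := by
        rw [← pow_mul, pow_succ]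
      rw [h3]
      calc (g 0 ^ (2 ^ n)) ^ 2 ≤ g n ^ 2 :=
            pow_le_pow_left₀ (pow_nonneg (norm_nonneg _) _) ih 2
        _ ≤ g (n + 1) := step n
  have bound : ∀ n, g n ≤ (‖B‖ * ‖x‖) * ‖C‖ ^ (2 ^ n) := by
    intro n
    calc g n ≤ ‖B‖ * ‖(C ^ (2 ^ n)) x‖ := ContinuousLinearMap.le_opNorm _ _
      _ ≤ ‖B‖ * (‖C ^ (2 ^ n)‖ * ‖x‖) := by
          gcongr
          exact ContinuousLinearMap.le_opNorm _ _
      _ ≤ ‖B‖ * (‖C‖ ^ (2 ^ n) * ‖x‖) := by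
          gcongr
          exact norm_pow_le' C (pow_pos (by norm_num) n)
      _ = (‖B‖ * ‖x‖) * ‖C‖ ^ (2 ^ n) := by ring
  have hg0 : g 0 = ‖B (C x)‖ := by simp [hg]
  by_contra hcon
  push_neg at hcon
  rw [← hg0] at hcon
  rcases eq_or_lt_of_le (norm_nonneg C) with hC0 | hC0
  · have hC0' : C = 0 := by rwa [eq_comm, norm_eq_zero] at hC0
    subst hC0'
    rw [hg0] at hcon
    simp at hcon
  · have hr : 1 < g 0 / ‖C‖ := (one_lt_div hC0).mpr hcon
    obtain ⟨n, hn⟩ := pow_unbounded_of_one_lt (‖B‖ * ‖x‖) hr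
    have h4 : (g 0 / ‖C‖) ^ n ≤ (g 0 / ‖C‖) ^ (2 ^ n) :=
      pow_le_pow_right₀ hr.le (Nat.lt_two_pow_self (n := n)).le
    have h5 : (g 0 / ‖C‖) ^ (2 ^ n) ≤ ‖B‖ * ‖x‖ := by
      rw [div_pow, div_le_iff₀ (pow_pos hC0 _)]
      calc g 0 ^ (2 ^ n) ≤ g n := iter n
        _ ≤ (‖B‖ * ‖x‖) * ‖C‖ ^ (2 ^ n) := bound n
    linarith

theorem stmt12 (A : H →L[ℂ] H) (hA : A.IsPositive) (T Ts S Ss : H →L[ℂ] H)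
    (hadjT : ∀ x y : H, ipA A (T x) y = ipA A x (Ts y))
    (hadjS : ∀ x y : H, ipA A (S x) y = ipA A x (Ss y)) :
    opA A (T + S) ^ 2 ≤
      (1 / 2) * (opA A (Ts ∘L T + Ss ∘L S) + opA A (Ts ∘L T - Ss ∘L S)) +
        opA A T * opA A S + 2 * wA A (Ss ∘L T) := by
  -- the square root of A
  have h0 : (0 : H →L[ℂ] H) ≤ A := (ContinuousLinearMap.nonneg_iff_isPositive A).mpr hA
  set B := CFC.sqrt A with hBdef
  have hB2 : B * B = A := CFC.sqrt_mul_sqrt_self A h0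
  have hBsa : IsSelfAdjoint B := IsSelfAdjoint.of_nonneg (CFC.sqrt_nonneg (a := A))
  have hBadj : ∀ u v : H, ⟪B u, v⟫_ℂ = ⟪u, B v⟫_ℂ := by
    intro u v
    conv_lhs => rw [← hBsa.adjoint_eq]
    exact ContinuousLinearMap.adjoint_inner_left _ _ _
  have hip : ∀ u v : H, ipA A u v = ⟪B u, B v⟫_ℂ := by
    intro u v
    rw [ipA, ← hB2, ContinuousLinearMap.mul_apply, hBadj]
  have hn : ∀ u : H, nA A u = ‖B u‖ := by
    intro u
    rw [nA, hip]
    have h := inner_self_eq_norm_sq (𝕜 := ℂ) (B u)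
    rw [RCLike.re_to_complex] at h
    rw [h]
    exact Real.sqrt_sq (norm_nonneg _)
  -- adjoint relations in terms of B
  have hT : ∀ u v : H, ⟪B (T u), B v⟫_ℂ = ⟪B u, B (Ts v)⟫_ℂ := by
    intro u v; rw [← hip, ← hip]; exact hadjT u v
  have hS : ∀ u v : H, ⟪B (S u), B v⟫_ℂ = ⟪B u, B (Ss v)⟫_ℂ := by
    intro u v; rw [← hip, ← hip]; exact hadjS u v
  have hT' : ∀ u v : H, ⟪B (Ts u), B v⟫_ℂ = ⟪B u, B (T v)⟫_ℂ := by
    intro u v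
    rw [← inner_conj_symm, ← hT v u, inner_conj_symm]
  have hS' : ∀ u v : H, ⟪B (Ss u), B v⟫_ℂ = ⟪B u, B (S v)⟫_ℂ := by
    intro u v
    rw [← inner_conj_symm, ← hS v u, inner_conj_symm]
  -- A-selfadjointness of the relevant products
  have hTT : ∀ u v : H, ⟪B ((Ts ∘L T) u), B v⟫_ℂ = ⟪B u, B ((Ts ∘L T) v)⟫_ℂ := by
    intro u v
    simp only [ContinuousLinearMap.comp_apply]
    rw [hT' (T u) v, hT u (T v)]
  have hSS : ∀ u v : H, ⟪B ((Ss ∘L S) u), B v⟫_ℂ = ⟪B u, B ((Ss ∘L S) v)⟫_ℂ := by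
    intro u v
    simp only [ContinuousLinearMap.comp_apply]
    rw [hS' (S u) v, hS u (S v)]
  have hCp : ∀ u v : H,
      ⟪B ((Ts ∘L T + Ss ∘L S) u), B v⟫_ℂ = ⟪B u, B ((Ts ∘L T + Ss ∘L S) v)⟫_ℂ := by
    intro u v
    simp only [ContinuousLinearMap.add_apply, map_add, inner_add_left, inner_add_right]
    rw [hTT u v, hSS u v]
  have hCm : ∀ u v : H,
      ⟪B ((Ts ∘L T - Ss ∘L S) u), B v⟫_ℂ = ⟪B u, B ((Ts ∘L T - Ss ∘L S) v)⟫_ℂ := by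
    intro u v
    simp only [ContinuousLinearMap.sub_apply, map_sub, inner_sub_left, inner_sub_right]
    rw [hTT u v, hSS u v]
  -- bounds for T and S
  have keyT : ∀ u : H, ‖B u‖ = 1 → ‖B (T u)‖ ≤ Real.sqrt ‖Ts ∘L T‖ := by
    intro u hu
    apply Real.le_sqrt_of_sq_le
    calc ‖B (T u)‖ ^ 2 = RCLike.re ⟪B (T u), B (T u)⟫_ℂ := (inner_self_eq_norm_sq _).symm
      _ = RCLike.re ⟪B u, B ((Ts ∘L T) u)⟫_ℂ := by
          rw [hT u (T u)]; rfl
      _ ≤ ‖(⟪B u, B ((Ts ∘L T) u)⟫_ℂ : ℂ)‖ := RCLike.re_le_norm _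
      _ ≤ ‖B u‖ * ‖B ((Ts ∘L T) u)‖ := norm_inner_le_norm _ _
      _ = ‖B ((Ts ∘L T) u)‖ := by rw [hu, one_mul]
      _ ≤ ‖Ts ∘L T‖ := key_bound B _ hTT hu
  have keyS : ∀ u : H, ‖B u‖ = 1 → ‖B (S u)‖ ≤ Real.sqrt ‖Ss ∘L S‖ := by
    intro u hu
    apply Real.le_sqrt_of_sq_le
    calc ‖B (S u)‖ ^ 2 = RCLike.re ⟪B (S u), B (S u)⟫_ℂ := (inner_self_eq_norm_sq _).symm
      _ = RCLike.re ⟪B u, B ((Ss ∘L S) u)⟫_ℂ := by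
          rw [hS u (S u)]; rfl
      _ ≤ ‖(⟪B u, B ((Ss ∘L S) u)⟫_ℂ : ℂ)‖ := RCLike.re_le_norm _
      _ ≤ ‖B u‖ * ‖B ((Ss ∘L S) u)‖ := norm_inner_le_norm _ _
      _ = ‖B ((Ss ∘L S) u)‖ := by rw [hu, one_mul]
      _ ≤ ‖Ss ∘L S‖ := key_bound B _ hSS hu
  -- BddAbove facts
  have bddT : BddAbove {c : ℝ | ∃ x : H, nA A x = 1 ∧ c = nA A (T x)} := by
    refine ⟨Real.sqrt ‖Ts ∘L T‖, ?_⟩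
    rintro c ⟨x, hx, rfl⟩
    rw [hn]
    exact keyT x (by rw [← hn]; exact hx)
  have bddS : BddAbove {c : ℝ | ∃ x : H, nA A x = 1 ∧ c = nA A (S x)} := by
    refine ⟨Real.sqrt ‖Ss ∘L S‖, ?_⟩
    rintro c ⟨x, hx, rfl⟩
    rw [hn]
    exact keyS x (by rw [← hn]; exact hx)
  have bddCp : BddAbove {c : ℝ | ∃ x : H, nA A x = 1 ∧ c = nA A ((Ts ∘L T + Ss ∘L S) x)} := by
    refine ⟨‖Ts ∘L T + Ss ∘L S‖, ?_⟩
    rintro c ⟨x, hx, rfl⟩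
    rw [hn]
    exact key_bound B _ hCp (by rw [← hn]; exact hx)
  have bddCm : BddAbove {c : ℝ | ∃ x : H, nA A x = 1 ∧ c = nA A ((Ts ∘L T - Ss ∘L S) x)} := by
    refine ⟨‖Ts ∘L T - Ss ∘L S‖, ?_⟩
    rintro c ⟨x, hx, rfl⟩
    rw [hn]
    exact key_bound B _ hCm (by rw [← hn]; exact hx)
  -- the numerical radius set
  have hipW : ∀ x : H, ipA A ((Ss ∘L T) x) x = ⟪B (T x), B (S x)⟫_ℂ := by
    intro x
    rw [hip]
    simp only [ContinuousLinearMap.comp_apply]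
    exact hS' (T x) x
  have bddW : BddAbove {c : ℝ |
      ∃ x : H, nA A x = 1 ∧ c = ‖ipA A ((Ss ∘L T) x) x‖} := by
    refine ⟨Real.sqrt ‖Ts ∘L T‖ * Real.sqrt ‖Ss ∘L S‖, ?_⟩
    rintro c ⟨x, hx, rfl⟩
    have hx' : ‖B x‖ = 1 := by rw [← hn]; exact hx
    rw [hipW x]
    calc ‖(⟪B (T x), B (S x)⟫_ℂ : ℂ)‖ ≤ ‖B (T x)‖ * ‖B (S x)‖ := norm_inner_le_norm _ _
      _ ≤ Real.sqrt ‖Ts ∘L T‖ * Real.sqrt ‖Ss ∘L S‖ :=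
          mul_le_mul (keyT x hx') (keyS x hx') (norm_nonneg _) (Real.sqrt_nonneg _)
  -- nonnegativity of all suprema
  have hopT0 : 0 ≤ opA A T :=
    Real.sSup_nonneg (by rintro c ⟨x, -, rfl⟩; exact nA_nonneg A _)
  have hopS0 : 0 ≤ opA A S :=
    Real.sSup_nonneg (by rintro c ⟨x, -, rfl⟩; exact nA_nonneg A _)
  have hopCp0 : 0 ≤ opA A (Ts ∘L T + Ss ∘L S) :=
    Real.sSup_nonneg (by rintro c ⟨x, -, rfl⟩; exact nA_nonneg A _)
  have hopCm0 : 0 ≤ opA A (Ts ∘L T - Ss ∘L S) :=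
    Real.sSup_nonneg (by rintro c ⟨x, -, rfl⟩; exact nA_nonneg A _)
  have hw0 : 0 ≤ wA A (Ss ∘L T) :=
    Real.sSup_nonneg (by rintro c ⟨x, -, rfl⟩; exact norm_nonneg _)
  set r : ℝ := (1 / 2) * (opA A (Ts ∘L T + Ss ∘L S) + opA A (Ts ∘L T - Ss ∘L S)) +
      opA A T * opA A S + 2 * wA A (Ss ∘L T) with hr
  have hr0 : 0 ≤ r := by
    have := mul_nonneg hopT0 hopS0
    rw [hr]; linarith
  -- the pointwise estimate
  have hpt : ∀ x : H, nA A x = 1 → ‖B ((T + S) x)‖ ^ 2 ≤ r := by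
    intro x hx
    have hx' : ‖B x‖ = 1 := by rw [← hn]; exact hx
    set α := ‖B (T x)‖ with hα
    set β := ‖B (S x)‖ with hβ
    -- α ≤ opA T, β ≤ opA S
    have hα1 : α ≤ opA A T := le_csSup bddT ⟨x, hx, (hn _).symm⟩
    have hβ1 : β ≤ opA A S := le_csSup bddS ⟨x, hx, (hn _).symm⟩
    -- the inner product term
    have hw : RCLike.re ⟪B (T x), B (S x)⟫_ℂ ≤ wA A (Ss ∘L T) := by
      calc RCLike.re ⟪B (T x), B (S x)⟫_ℂ ≤ ‖(⟪B (T x), B (S x)⟫_ℂ : ℂ)‖ :=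
            RCLike.re_le_norm _
        _ = ‖ipA A ((Ss ∘L T) x) x‖ := by rw [hipW x]
        _ ≤ wA A (Ss ∘L T) := le_csSup bddW ⟨x, hx, rfl⟩
    -- α² + β² ≤ opA C₊
    have hsum : α ^ 2 + β ^ 2 ≤ opA A (Ts ∘L T + Ss ∘L S) := by
      have h1 : RCLike.re (ipA A ((Ts ∘L T + Ss ∘L S) x) x) = α ^ 2 + β ^ 2 := by
        rw [hip]
        simp only [ContinuousLinearMap.add_apply, ContinuousLinearMap.comp_apply, map_add,
          inner_add_left]
        rw [hT' (T x) x, hS' (S x) x, inner_self_eq_norm_sq, inner_self_eq_norm_sq]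
      calc α ^ 2 + β ^ 2 = RCLike.re (ipA A ((Ts ∘L T + Ss ∘L S) x) x) := h1.symm
        _ ≤ ‖ipA A ((Ts ∘L T + Ss ∘L S) x) x‖ := RCLike.re_le_norm _
        _ ≤ ‖B ((Ts ∘L T + Ss ∘L S) x)‖ * ‖B x‖ := by rw [hip]; exact norm_inner_le_norm _ _
        _ = nA A ((Ts ∘L T + Ss ∘L S) x) := by rw [hx', mul_one, hn]
        _ ≤ opA A (Ts ∘L T + Ss ∘L S) := le_csSup bddCp ⟨x, hx, rfl⟩
    -- |α² − β²| ≤ opA C₋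
    have hdiffre : RCLike.re (ipA A ((Ts ∘L T - Ss ∘L S) x) x) = α ^ 2 - β ^ 2 := by
      rw [hip]
      simp only [ContinuousLinearMap.sub_apply, ContinuousLinearMap.comp_apply, map_sub,
        inner_sub_left]
      rw [hT' (T x) x, hS' (S x) x, inner_self_eq_norm_sq, inner_self_eq_norm_sq]
    have hdiffb : |α ^ 2 - β ^ 2| ≤ opA A (Ts ∘L T - Ss ∘L S) := by
      rw [← hdiffre]
      calc |RCLike.re (ipA A ((Ts ∘L T - Ss ∘L S) x) x)|
          ≤ ‖ipA A ((Ts ∘L T - Ss ∘L S) x) x‖ := RCLike.abs_re_le_norm _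
        _ ≤ ‖B ((Ts ∘L T - Ss ∘L S) x)‖ * ‖B x‖ := by rw [hip]; exact norm_inner_le_norm _ _
        _ = nA A ((Ts ∘L T - Ss ∘L S) x) := by rw [hx', mul_one, hn]
        _ ≤ opA A (Ts ∘L T - Ss ∘L S) := le_csSup bddCm ⟨x, hx, rfl⟩
    have hαβ : α * β ≤ opA A T * opA A S :=
      mul_le_mul hα1 hβ1 (norm_nonneg _) hopT0
    -- expand the norm
    have hadd : B ((T + S) x) = B (T x) + B (S x) := by
      rw [ContinuousLinearMap.add_apply, map_add]
    rw [hadd, norm_add_sq (𝕜 := ℂ)]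
    rw [← hα, ← hβ]
    rcases le_total α β with hab | hab
    · have h2 : α * α ≤ α * β := mul_le_mul_of_nonneg_left hab (norm_nonneg _)
      have h3 : β ^ 2 - α ^ 2 ≤ opA A (Ts ∘L T - Ss ∘L S) := by
        calc β ^ 2 - α ^ 2 ≤ |α ^ 2 - β ^ 2| := by rw [abs_sub_comm]; exact le_abs_self _
          _ ≤ _ := hdiffb
      rw [hr]
      nlinarith [hw, hsum, hαβ]
    · have h2 : β * β ≤ α * β := mul_le_mul_of_nonneg_right hab (norm_nonneg _)
      have h3 : α ^ 2 - β ^ 2 ≤ opA A (Ts ∘L T - Ss ∘L S) :=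
        le_trans (le_abs_self _) hdiffb
      rw [hr]
      nlinarith [hw, hsum, hαβ]
  -- assemble
  have hle : opA A (T + S) ≤ Real.sqrt r := by
    apply Real.sSup_le _ (Real.sqrt_nonneg r)
    rintro c ⟨x, hx, rfl⟩
    rw [hn]
    exact Real.le_sqrt_of_sq_le (hpt x hx)
  have hop0 : 0 ≤ opA A (T + S) :=
    Real.sSup_nonneg (by rintro c ⟨x, -, rfl⟩; exact nA_nonneg A _)
  calc opA A (T + S) ^ 2 ≤ Real.sqrt r ^ 2 := pow_le_pow_left₀ hop0 hle 2
    _ = r := Real.sq_sqrt hr0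
end

section
/- Let H be a complex Hilbert space, A a positive bounded operator, T, S bounded operators admitting A-adjoints, and α ∈ [0,1]. Then ‖T + S‖_A² ≤ √( ‖(T^♯T)² + (S^♯S)²‖_A + 2 w_A(S^♯T)² ) + (α+1) ‖T‖_A ‖S‖_A + (1−α) w_A(S^♯T). -/
open scoped InnerProductSpace

variable {H : Type*} [NormedAddCommGroup H] [InnerProductSpace ℂ H] [CompleteSpace H]

set_option maxHeartbeats 1000000
set_option synthInstance.maxHeartbeats 400000
set_option linter.unusedTactic false
set_option linter.unreachableTactic false
set_option linter.unusedSectionVars false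

open scoped ComplexConjugate

section pureips
omit [CompleteSpace H]

lemma my_buzano (a b e : H) (he : ‖e‖ = 1) :
    ‖⟪a,e⟫_ℂ * ⟪e,b⟫_ℂ‖ ≤ (‖a‖*‖b‖ + ‖⟪a,b⟫_ℂ‖)/2 := by
  set c : ℂ := 2 * ⟪e,b⟫_ℂ with hc
  have hsq : ‖c • e - b‖^2 = ‖b‖^2 := by
    have h := @norm_sub_sq ℂ _ _ _ _ (c • e) b
    have h2 : ‖c • e‖^2 = 4 * ‖⟪e,b⟫_ℂ‖ ^2 := by
      rw [norm_smul, he, mul_one, hc, norm_mul]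
      have h2' : ‖(2:ℂ)‖ = 2 := by norm_num
      rw [h2']; ring
    have h3 : ⟪c • e, b⟫_ℂ = 2 * Complex.normSq ⟪e,b⟫_ℂ := by
      rw [inner_smul_left, hc, map_mul]
      have : (starRingEnd ℂ) ⟪e,b⟫_ℂ * ⟪e,b⟫_ℂ = (Complex.normSq ⟪e,b⟫_ℂ : ℂ) := by
        rw [mul_comm, Complex.mul_conj]
      simp only [map_ofNat, mul_assoc, this]
    have h3' : RCLike.re ⟪c • e, b⟫_ℂ = 2 * ‖⟪e,b⟫_ℂ‖ ^2 := by
      rw [h3, Complex.sq_norm]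
      simp
    rw [h, h2, h3']
    ring
  have hle : ‖c • e - b‖ ≤ ‖b‖ := by
    nlinarith [norm_nonneg (c • e - b), norm_nonneg b]
  have hinner : ⟪a, c • e - b⟫_ℂ = 2 * ⟪e,b⟫_ℂ * ⟪a,e⟫_ℂ - ⟪a,b⟫_ℂ := by
    rw [inner_sub_right, inner_smul_right]
    try ring
  have hcs : ‖2 * ⟪e,b⟫_ℂ * ⟪a,e⟫_ℂ - ⟪a,b⟫_ℂ‖ ≤ ‖a‖ * ‖b‖ := by
    rw [← hinner]
    calc ‖⟪a, c • e - b⟫_ℂ‖ ≤ ‖a‖ * ‖c • e - b‖ := norm_inner_le_norm a _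
    _ ≤ ‖a‖ * ‖b‖ := by gcongr
  have htri : ‖2 * ⟪e,b⟫_ℂ * ⟪a,e⟫_ℂ‖ ≤
      ‖2 * ⟪e,b⟫_ℂ * ⟪a,e⟫_ℂ - ⟪a,b⟫_ℂ‖ + ‖⟪a,b⟫_ℂ‖ := by
    have := norm_add_le (2 * ⟪e,b⟫_ℂ * ⟪a,e⟫_ℂ - ⟪a,b⟫_ℂ) ⟪a,b⟫_ℂ
    simpa using this
  have habs : ‖2 * ⟪e,b⟫_ℂ * ⟪a,e⟫_ℂ‖ = 2 * ‖⟪a,e⟫_ℂ * ⟪e,b⟫_ℂ‖ := by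
    simp [map_mul]; ring
  rw [habs] at htri
  linarith
lemma my_sumsq (a b e : H) (he : ‖e‖ = 1) :
    ‖⟪a,e⟫_ℂ‖^2 + ‖⟪b,e⟫_ℂ‖^2 ≤
      Real.sqrt (‖a‖^4 + ‖b‖^4 + 2*‖⟪a,b⟫_ℂ‖^2) := by
  set u : ℂ := ⟪a,e⟫_ℂ with hu
  set v : ℂ := ⟪b,e⟫_ℂ with hv
  set p : ℝ := ‖u‖ with hp
  set q : ℝ := ‖v‖ with hq
  set w : H := u • a + v • b with hw
  set M : ℝ := ‖a‖^4 + ‖b‖^4 + 2*‖⟪a,b⟫_ℂ‖^2 with hM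
  have hM0 : 0 ≤ M := by positivity
  have hp0 : 0 ≤ p := norm_nonneg u
  have hq0 : 0 ≤ q := norm_nonneg v
  rcases eq_or_lt_of_le (add_nonneg (pow_nonneg hp0 2) (pow_nonneg hq0 2)) with h0 | hpos
  · rw [← h0]; exact Real.sqrt_nonneg M
  have hwe : ⟪w, e⟫_ℂ = ((p^2 + q^2 : ℝ) : ℂ) := by
    rw [hw, inner_add_left, inner_smul_left, inner_smul_left, ← hu, ← hv]
    have e1 : ∀ z : ℂ, (starRingEnd ℂ) z * z = ((‖z‖ ^ 2 : ℝ) : ℂ) := fun z => by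
      rw [mul_comm, Complex.mul_conj, Complex.normSq_eq_norm_sq]; try (push_cast; ring)
    rw [e1, e1, hp, hq]; push_cast; ring
  have h1 : p^2 + q^2 ≤ ‖w‖ := by
    have hcs : ‖⟪w, e⟫_ℂ‖ ≤ ‖w‖ * ‖e‖ := by
      exact norm_inner_le_norm w e
    rw [hwe, he, mul_one, Complex.norm_real, Real.norm_eq_abs, abs_of_nonneg hpos.le] at hcs
    exact hcs
  have h2 : ‖w‖^2 ≤ p^2*‖a‖^2 + q^2*‖b‖^2 + 2*p*q*‖⟪a,b⟫_ℂ‖ := by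
    have hexp := @norm_add_sq ℂ _ _ _ _ (u • a) (v • b)
    have hna : ‖u • a‖^2 = p^2 * ‖a‖^2 := by
      rw [norm_smul, mul_pow, hp]
    have hnb : ‖v • b‖^2 = q^2 * ‖b‖^2 := by
      rw [norm_smul, mul_pow, hq]
    have hre : RCLike.re ⟪u • a, v • b⟫_ℂ ≤ p * q * ‖⟪a,b⟫_ℂ‖ := by
      have e1 : ⟪u • a, v • b⟫_ℂ = conj u * v * ⟪a,b⟫_ℂ := by
        rw [inner_smul_left, inner_smul_right]; ring
      calc RCLike.re ⟪u • a, v • b⟫_ℂ ≤ ‖⟪u • a, v • b⟫_ℂ‖ := by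
            exact RCLike.re_le_norm _
        _ = p * q * ‖⟪a,b⟫_ℂ‖ := by
            rw [e1, norm_mul, norm_mul, Complex.norm_conj, ← hp, ← hq]; all_goals ring
    rw [hw, hexp, hna, hnb]
    linarith
  have hLHS0 : 0 ≤ p^2*‖a‖^2 + q^2*‖b‖^2 + 2*p*q*‖⟪a,b⟫_ℂ‖ := by positivity
  have h3 : p^2*‖a‖^2 + q^2*‖b‖^2 + 2*p*q*‖⟪a,b⟫_ℂ‖ ≤ (p^2+q^2) * Real.sqrt M := by
    have hcs : (p^2*‖a‖^2 + q^2*‖b‖^2 + 2*p*q*‖⟪a,b⟫_ℂ‖)^2 ≤ (p^2+q^2)^2 * M := by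
      rw [hM]
      nlinarith [sq_nonneg (p^2*‖b‖^2 - q^2*‖a‖^2), sq_nonneg (p^2*‖⟪a,b⟫_ℂ‖ - p*q*‖a‖^2),
        sq_nonneg (q^2*‖⟪a,b⟫_ℂ‖ - p*q*‖b‖^2),
        norm_nonneg ⟪a,b⟫_ℂ, norm_nonneg a, norm_nonneg b, mul_nonneg hp0 hq0,
        sq_nonneg (p*‖a‖ - q*‖b‖), sq_nonneg (p*‖b‖ - q*‖a‖)]
    calc p^2*‖a‖^2 + q^2*‖b‖^2 + 2*p*q*‖⟪a,b⟫_ℂ‖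
        = Real.sqrt ((p^2*‖a‖^2 + q^2*‖b‖^2 + 2*p*q*‖⟪a,b⟫_ℂ‖)^2) :=
          (Real.sqrt_sq hLHS0).symm
      _ ≤ Real.sqrt ((p^2+q^2)^2 * M) := Real.sqrt_le_sqrt hcs
      _ = (p^2+q^2) * Real.sqrt M := by
          rw [Real.sqrt_mul (sq_nonneg _), Real.sqrt_sq (by positivity)]
  have h4 : (p^2+q^2) * (p^2+q^2) ≤ (p^2+q^2) * Real.sqrt M := by
    nlinarith [h1, h2, h3, norm_nonneg w]
  exact le_of_mul_le_mul_left h4 hpos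
lemma my_key (a b e : H) (he : ‖e‖ = 1) (α : ℝ) (h0 : 0 ≤ α) (h1 : α ≤ 1) :
    (‖⟪a,e⟫_ℂ‖ + ‖⟪e,b⟫_ℂ‖)^2 ≤
      Real.sqrt (‖a‖^4 + ‖b‖^4 + 2*‖⟪a,b⟫_ℂ‖^2) +
        (1+α) * (‖a‖*‖b‖) + (1-α) * ‖⟪a,b⟫_ℂ‖ := by
  have heb : ‖⟪e,b⟫_ℂ‖ = ‖⟪b,e⟫_ℂ‖ := by
    rw [← inner_conj_symm b e, Complex.norm_conj]
  have hsum := my_sumsq a b e he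
  have hbuz := my_buzano a b e he
  have hpa : ‖⟪a,e⟫_ℂ‖ ≤ ‖a‖ := by
    have := norm_inner_le_norm (𝕜 := ℂ) a e
    rw [he, mul_one] at this; exact this
  have hpb : ‖⟪b,e⟫_ℂ‖ ≤ ‖b‖ := by
    have := norm_inner_le_norm (𝕜 := ℂ) b e
    rw [he, mul_one] at this; exact this
  have habmul : ‖⟪a,e⟫_ℂ‖ * ‖⟪e,b⟫_ℂ‖ = ‖⟪a,e⟫_ℂ * ⟪e,b⟫_ℂ‖ :=
    (norm_mul _ _).symm
  have hprod_le : ‖⟪a,e⟫_ℂ‖ * ‖⟪e,b⟫_ℂ‖ ≤ ‖a‖ * ‖b‖ := by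
    rw [heb]
    exact mul_le_mul hpa hpb (norm_nonneg _) (norm_nonneg a)
  have expand : (‖⟪a,e⟫_ℂ‖ + ‖⟪e,b⟫_ℂ‖)^2 =
      ‖⟪a,e⟫_ℂ‖^2 + ‖⟪b,e⟫_ℂ‖^2 +
        2 * (‖⟪a,e⟫_ℂ‖ * ‖⟪e,b⟫_ℂ‖) := by
    rw [heb]; ring
  rw [expand, habmul] at *
  have h2 : 2 * ‖⟪a,e⟫_ℂ * ⟪e,b⟫_ℂ‖ ≤
      (1+α) * (‖a‖*‖b‖) + (1-α) * ‖⟪a,b⟫_ℂ‖ := by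
    have hb2 : 2 * ‖⟪a,e⟫_ℂ * ⟪e,b⟫_ℂ‖ ≤ ‖a‖*‖b‖ + ‖⟪a,b⟫_ℂ‖ := by
      linarith
    have hc2 : ‖⟪a,e⟫_ℂ * ⟪e,b⟫_ℂ‖ ≤ ‖a‖*‖b‖ := by rw [← habmul]; exact hprod_le
    nlinarith
  linarith

end pureips

lemma opA_nonneg (A T : H →L[ℂ] H) : 0 ≤ opA A T := by
  apply Real.sSup_nonneg
  rintro c ⟨x, hx, rfl⟩
  exact Real.sqrt_nonneg _

lemma wA_nonneg (A T : H →L[ℂ] H) : 0 ≤ wA A T := by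
  apply Real.sSup_nonneg
  rintro c ⟨x, hx, rfl⟩
  exact norm_nonneg _

section powertrick
variable (A B : H →L[ℂ] H) (hip : ∀ x y : H, ipA A x y = ⟪B x, B y⟫_ℂ)

include hip

lemma nA_eq (x : H) : nA A x = ‖B x‖ := by
  rw [nA, hip]
  rw [show (⟪B x, B x⟫_ℂ).re = RCLike.re ⟪B x, B x⟫_ℂ from rfl, inner_self_eq_norm_sq]
  exact Real.sqrt_sq (norm_nonneg _)

lemma nA_sq (u : H) : nA A u ^ 2 = (ipA A u u).re := by
  rw [nA_eq A B hip, hip]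
  exact (inner_self_eq_norm_sq (𝕜 := ℂ) (B u)).symm

lemma re_ip_le (x v : H) (hx : nA A x = 1) : (ipA A x v).re ≤ nA A v := by
  calc (ipA A x v).re ≤ ‖ipA A x v‖ := Complex.re_le_norm _
    _ = ‖⟪B x, B v⟫_ℂ‖ := by rw [hip]
    _ ≤ ‖B x‖ * ‖B v‖ := norm_inner_le_norm _ _
    _ = nA A v := by rw [← nA_eq A B hip, ← nA_eq A B hip, hx, one_mul]

lemma abs_ip_le (x v : H) : ‖ipA A x v‖ ≤ nA A x * nA A v := by
  rw [hip, nA_eq A B hip, nA_eq A B hip]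
  exact norm_inner_le_norm _ _

lemma ip_symm (u v : H) : ipA A u v = conj (ipA A v u) := by
  rw [hip, hip, inner_conj_symm]

variable (G Gs : H →L[ℂ] H) (hadj : ∀ x y : H, ipA A (G x) y = ipA A x (Gs y))
include hadj

lemma ip_left (u v : H) : ipA A (Gs u) v = ipA A u (G v) := by
  rw [ip_symm A B hip, ← hadj, ← ip_symm A B hip]

lemma powertrick (x : H) (hx : nA A x = 1) : nA A (G x) ^ 2 ≤ ‖Gs ∘L G‖ := by
  set Q : H →L[ℂ] H := Gs ∘L G with hQdef
  have hQ : ∀ u v, ipA A (Q u) v = ipA A u (Q v) := by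
    intro u v
    calc ipA A (Q u) v = ipA A (Gs (G u)) v := rfl
      _ = ipA A (G u) (G v) := ip_left A B hip G Gs hadj _ _
      _ = ipA A u (Gs (G v)) := hadj _ _
      _ = ipA A u (Q v) := rfl
  have hQn : ∀ n (u v : H), ipA A ((Q^n) u) v = ipA A u ((Q^n) v) := by
    intro n
    induction n with
    | zero => intro u v; simp [ContinuousLinearMap.one_apply]
    | succ n ih =>
      intro u v
      rw [pow_succ, ContinuousLinearMap.mul_apply, ih, hQ, ← ContinuousLinearMap.mul_apply,
        ← pow_succ', pow_succ]
  have hGQ : ∀ u, ipA A (G u) (G u) = ipA A u (Q u) := fun u => hadj u (G u)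
  have claim : ∀ n, nA A (G x) ^ (2^(n+1)) ≤ nA A ((Q^(2^n)) x) := by
    intro n
    induction n with
    | zero =>
      rw [pow_zero, pow_one, pow_one]
      rw [nA_sq A B hip, hGQ]
      exact re_ip_le A B hip x (Q x) hx
    | succ n ih =>
      have e1 : (2:ℕ)^(n+2) = 2^(n+1) * 2 := by rw [pow_succ]
      rw [e1, pow_mul]
      calc (nA A (G x) ^ (2^(n+1)))^2 ≤ (nA A ((Q^(2^n)) x))^2 := by
            apply pow_le_pow_left₀ (pow_nonneg (Real.sqrt_nonneg _) _) ih
        _ = (ipA A ((Q^(2^n)) x) ((Q^(2^n)) x)).re := nA_sq A B hip _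
        _ = (ipA A x ((Q^(2^n)) ((Q^(2^n)) x))).re := by rw [hQn]
        _ = (ipA A x ((Q^(2^(n+1))) x)).re := by
            rw [show (2:ℕ)^(n+1) = 2^n + 2^n by rw [pow_succ, mul_two], pow_add,
              ContinuousLinearMap.mul_apply]
        _ ≤ nA A ((Q^(2^(n+1))) x) := re_ip_le A B hip x _ hx
  have bound : ∀ m : ℕ, 0 < m → nA A ((Q^m) x) ≤ ‖B‖ * ‖x‖ * ‖Q‖^m := by
    intro m hm
    rw [nA_eq A B hip]
    calc ‖B ((Q^m) x)‖ ≤ ‖B‖ * ‖(Q^m) x‖ := B.le_opNorm _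
      _ ≤ ‖B‖ * (‖Q^m‖ * ‖x‖) := by
          apply mul_le_mul_of_nonneg_left ((Q^m).le_opNorm x) (norm_nonneg B)
      _ ≤ ‖B‖ * (‖Q‖^m * ‖x‖) := by
          apply mul_le_mul_of_nonneg_left _ (norm_nonneg B)
          exact mul_le_mul_of_nonneg_right (norm_pow_le' Q hm) (norm_nonneg x)
      _ = ‖B‖ * ‖x‖ * ‖Q‖^m := by ring
  set C : ℝ := ‖B‖ * ‖x‖ with hC
  have hC0 : 0 ≤ C := mul_nonneg (norm_nonneg B) (norm_nonneg x)
  have key : ∀ n : ℕ, (nA A (G x) ^ 2) ^ (2^n) ≤ C * ‖Q‖^(2^n) := by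
    intro n
    have e1 : nA A (G x) ^ (2^(n+1)) = (nA A (G x) ^ 2) ^ (2^n) := by
      rw [← pow_mul, show 2 * 2^n = 2^(n+1) by rw [pow_succ, mul_comm]]
    rw [← e1]
    exact le_trans (claim n) (bound _ (by positivity))
  by_contra hcon
  push_neg at hcon
  set t : ℝ := nA A (G x) ^ 2 with ht
  have ht0 : 0 ≤ t := pow_nonneg (Real.sqrt_nonneg _) 2
  rcases eq_or_lt_of_le (norm_nonneg Q) with hQ0 | hQpos
  · have hk := key 0
    rw [pow_zero, pow_one, pow_one, ← hQ0, mul_zero] at hk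
    rw [← hQ0] at hcon
    linarith
  · set r : ℝ := t / ‖Q‖ with hr
    have hr1 : 1 < r := (one_lt_div hQpos).mpr hcon
    obtain ⟨n, hn⟩ := pow_unbounded_of_one_lt C hr1
    have h2 : r ^ n ≤ r ^ (2^n) := pow_le_pow_right₀ hr1.le (Nat.le_of_lt (Nat.lt_two_pow_self))
    have h3 : r ^ (2^n) ≤ C := by
      have := key n
      rw [hr, div_pow]
      rw [div_le_iff₀ (by positivity)]
      exact this
    linarith [hn.trans_le (h2.trans h3)]


lemma bddOp : BddAbove {c : ℝ | ∃ x : H, nA A x = 1 ∧ c = nA A (G x)} := by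
  refine ⟨Real.sqrt ‖Gs ∘L G‖, ?_⟩
  rintro c ⟨x, hx, rfl⟩
  calc nA A (G x) = Real.sqrt (nA A (G x)^2) := (Real.sqrt_sq (Real.sqrt_nonneg _)).symm
    _ ≤ Real.sqrt ‖Gs ∘L G‖ := Real.sqrt_le_sqrt (powertrick A B hip G Gs hadj x hx)

lemma nA_le_opA (x : H) (hx : nA A x = 1) : nA A (G x) ≤ opA A G :=
  le_csSup (bddOp A B hip G Gs hadj) ⟨x, hx, rfl⟩

lemma bddW : BddAbove {c : ℝ | ∃ x : H, nA A x = 1 ∧ c = ‖ipA A (G x) x‖} := by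
  refine ⟨Real.sqrt ‖Gs ∘L G‖, ?_⟩
  rintro c ⟨x, hx, rfl⟩
  calc ‖ipA A (G x) x‖ ≤ nA A (G x) * nA A x := abs_ip_le A B hip _ _
    _ = nA A (G x) := by rw [hx, mul_one]
    _ = Real.sqrt (nA A (G x)^2) := (Real.sqrt_sq (Real.sqrt_nonneg _)).symm
    _ ≤ Real.sqrt ‖Gs ∘L G‖ := Real.sqrt_le_sqrt (powertrick A B hip G Gs hadj x hx)

lemma abs_le_wA (x : H) (hx : nA A x = 1) : ‖ipA A (G x) x‖ ≤ wA A G :=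
  le_csSup (bddW A B hip G Gs hadj) ⟨x, hx, rfl⟩

end powertrick

theorem stmt13 (A : H →L[ℂ] H) (hA : A.IsPositive) (T Ts S Ss : H →L[ℂ] H)
    (hadjT : ∀ x y : H, ipA A (T x) y = ipA A x (Ts y))
    (hadjS : ∀ x y : H, ipA A (S x) y = ipA A x (Ss y))
    (α : ℝ) (hα : α ∈ Set.Icc (0 : ℝ) 1) :
    opA A (T + S) ^ 2 ≤
      Real.sqrt (opA A ((Ts ∘L T) ∘L (Ts ∘L T) + (Ss ∘L S) ∘L (Ss ∘L S)) +
          2 * wA A (Ss ∘L T) ^ 2) +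
        (α + 1) * (opA A T * opA A S) + (1 - α) * wA A (Ss ∘L T) := by
  obtain ⟨hα0, hα1⟩ := hα
  -- construct the square root of A
  have h0 : (0 : H →L[ℂ] H) ≤ A := (ContinuousLinearMap.nonneg_iff_isPositive A).mpr hA
  set B : H →L[ℂ] H := CFC.sqrt A with hBdef
  have hB2 : B ^ 2 = A := CFC.sq_sqrt A h0
  have hBpos : B.IsPositive :=
    (ContinuousLinearMap.nonneg_iff_isPositive B).mp (CFC.sqrt_nonneg A)
  have hBsa : ∀ x y : H, ⟪B x, y⟫_ℂ = ⟪x, B y⟫_ℂ :=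
    (ContinuousLinearMap.isSelfAdjoint_iff_isSymmetric.mp hBpos.isSelfAdjoint)
  have hip : ∀ x y : H, ipA A x y = ⟪B x, B y⟫_ℂ := by
    intro x y
    have hAx : A x = B (B x) := by
      rw [← hB2, sq, ContinuousLinearMap.mul_apply]
    rw [ipA, hAx, hBsa]
  -- the relevant operators and their A-adjoints
  set G1 : H →L[ℂ] H := Ts ∘L T with hG1
  set G2 : H →L[ℂ] H := Ss ∘L S with hG2
  set G : H →L[ℂ] H := Ss ∘L T with hG
  set R : H →L[ℂ] H := G1 ∘L G1 + G2 ∘L G2 with hR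
  have hadj1 : ∀ x y : H, ipA A (G1 x) y = ipA A x (G1 y) := by
    intro x y
    calc ipA A (G1 x) y = ipA A (Ts (T x)) y := rfl
      _ = ipA A (T x) (T y) := ip_left A B hip T Ts hadjT _ _
      _ = ipA A x (Ts (T y)) := hadjT _ _
      _ = ipA A x (G1 y) := rfl
  have hadj2 : ∀ x y : H, ipA A (G2 x) y = ipA A x (G2 y) := by
    intro x y
    calc ipA A (G2 x) y = ipA A (Ss (S x)) y := rfl
      _ = ipA A (S x) (S y) := ip_left A B hip S Ss hadjS _ _
      _ = ipA A x (Ss (S y)) := hadjS _ _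
      _ = ipA A x (G2 y) := rfl
  have hadjG : ∀ x y : H, ipA A (G x) y = ipA A x ((Ts ∘L S) y) := by
    intro x y
    calc ipA A (G x) y = ipA A (Ss (T x)) y := rfl
      _ = ipA A (T x) (S y) := ip_left A B hip S Ss hadjS _ _
      _ = ipA A x (Ts (S y)) := hadjT _ _
  have ip_add_left : ∀ u v y : H, ipA A (u + v) y = ipA A u y + ipA A v y := by
    intro u v y
    simp [ipA, map_add, inner_add_left]
  have ip_add_right : ∀ y u v : H, ipA A y (u + v) = ipA A y u + ipA A y v := by
    intro y u v
    simp [ipA, inner_add_right]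
  have hadjR : ∀ x y : H, ipA A (R x) y = ipA A x (R y) := by
    intro x y
    have hRx : ∀ z : H, R z = G1 (G1 z) + G2 (G2 z) := by
      intro z; simp [hR, ContinuousLinearMap.add_apply]
    rw [hRx, hRx, ip_add_left, ip_add_right, hadj1, hadj1, hadj2, hadj2]
  -- nonnegativity of the RHS
  set K : ℝ := opA A R + 2 * wA A G ^ 2 with hK
  set RHS : ℝ := Real.sqrt K + (α + 1) * (opA A T * opA A S) + (1 - α) * wA A G with hRHS
  have hRHS0 : 0 ≤ RHS := by
    have h1 := opA_nonneg A T
    have h2 := opA_nonneg A S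
    have h3 := wA_nonneg A G
    have h4 := Real.sqrt_nonneg K
    have : 0 ≤ (α + 1) * (opA A T * opA A S) :=
      mul_nonneg (by linarith) (mul_nonneg h1 h2)
    have : 0 ≤ (1 - α) * wA A G := mul_nonneg (by linarith) h3
    rw [hRHS]; positivity
  -- pointwise estimate
  have pointwise : ∀ x : H, nA A x = 1 → nA A ((T + S) x) ^ 2 ≤ RHS := by
    intro x hx
    have hax : ‖B x‖ = 1 := by rw [← nA_eq A B hip]; exact hx
    set a : H := B (T x) with ha
    set b : H := B (S x) with hb
    have hTSx : nA A ((T + S) x) = ‖a + b‖ := by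
      rw [nA_eq A B hip]
      congr 1
      simp [ContinuousLinearMap.add_apply, map_add]
      rfl
    have hna : ‖a‖ ≤ opA A T := by
      rw [← nA_eq A B hip]
      exact nA_le_opA A B hip T Ts hadjT x hx
    have hnb : ‖b‖ ≤ opA A S := by
      rw [← nA_eq A B hip]
      exact nA_le_opA A B hip S Ss hadjS x hx
    have habG : ⟪a, b⟫_ℂ = ipA A (G x) x := by
      rw [← hip]
      calc ipA A (T x) (S x) = ipA A (Ss (T x)) x :=
            (ip_left A B hip S Ss hadjS (T x) x).symm
        _ = ipA A (G x) x := rfl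
    have hab : ‖⟪a, b⟫_ℂ‖ ≤ wA A G := by
      rw [habG]
      exact abs_le_wA A B hip G (Ts ∘L S) hadjG x hx
    have hab0 : 0 ≤ ‖⟪a, b⟫_ℂ‖ := norm_nonneg _
    -- fourth power bound
    have h4T : ‖a‖ ^ 4 ≤ (ipA A x (G1 (G1 x))).re := by
      have s1 : ‖a‖ ^ 2 ≤ nA A (G1 x) := by
        rw [← nA_eq A B hip, nA_sq A B hip, hadjT]
        exact re_ip_le A B hip x _ hx
      have s2 : nA A (G1 x) ^ 2 = (ipA A x (G1 (G1 x))).re := by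
        rw [nA_sq A B hip, hadj1]
      calc ‖a‖ ^ 4 = (‖a‖ ^ 2) ^ 2 := by ring
        _ ≤ nA A (G1 x) ^ 2 := pow_le_pow_left₀ (sq_nonneg _) s1 2
        _ = (ipA A x (G1 (G1 x))).re := s2
    have h4S : ‖b‖ ^ 4 ≤ (ipA A x (G2 (G2 x))).re := by
      have s1 : ‖b‖ ^ 2 ≤ nA A (G2 x) := by
        rw [← nA_eq A B hip, nA_sq A B hip, hadjS]
        exact re_ip_le A B hip x _ hx
      have s2 : nA A (G2 x) ^ 2 = (ipA A x (G2 (G2 x))).re := by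
        rw [nA_sq A B hip, hadj2]
      calc ‖b‖ ^ 4 = (‖b‖ ^ 2) ^ 2 := by ring
        _ ≤ nA A (G2 x) ^ 2 := pow_le_pow_left₀ (sq_nonneg _) s1 2
        _ = (ipA A x (G2 (G2 x))).re := s2
    have h4 : ‖a‖ ^ 4 + ‖b‖ ^ 4 ≤ opA A R := by
      have hRx : R x = G1 (G1 x) + G2 (G2 x) := by
        simp [hR, ContinuousLinearMap.add_apply]
      have hsum : (ipA A x (R x)).re = (ipA A x (G1 (G1 x))).re + (ipA A x (G2 (G2 x))).re := by
        rw [hRx, ip_add_right, Complex.add_re]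
      calc ‖a‖ ^ 4 + ‖b‖ ^ 4 ≤ (ipA A x (R x)).re := by rw [hsum]; linarith
        _ ≤ nA A (R x) := re_ip_le A B hip x _ hx
        _ ≤ opA A R := nA_le_opA A B hip R R hadjR x hx
    have hsumK : ‖a‖ ^ 4 + ‖b‖ ^ 4 + 2 * ‖⟪a, b⟫_ℂ‖ ^ 2 ≤ K := by
      rw [hK]
      have : ‖⟪a, b⟫_ℂ‖ ^ 2 ≤ wA A G ^ 2 := pow_le_pow_left₀ hab0 hab 2
      linarith
    rw [hTSx]
    rcases eq_or_lt_of_le (norm_nonneg (a + b)) with hz | hpos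
    · rw [← hz]
      simpa using hRHS0
    · set y : H := a + b with hy
      set e : H := ((‖y‖ : ℂ))⁻¹ • y with he'
      have he : ‖e‖ = 1 := by
        rw [he', norm_smul, norm_inv, Complex.norm_real, Real.norm_eq_abs,
          abs_of_pos hpos, inv_mul_cancel₀ hpos.ne']
      have hae : ‖y‖ * ‖⟪a, e⟫_ℂ‖ = ‖⟪a, y⟫_ℂ‖ := by
        rw [he', inner_smul_right, norm_mul, norm_inv, Complex.norm_real, Real.norm_eq_abs,
          abs_of_pos hpos]
        field_simp
      have hbe : ‖y‖ * ‖⟪e, b⟫_ℂ‖ = ‖⟪b, y⟫_ℂ‖ := by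
        rw [he', inner_smul_left, norm_mul, Complex.norm_conj, norm_inv, Complex.norm_real, Real.norm_eq_abs,
          abs_of_pos hpos]
        rw [show ‖⟪y, b⟫_ℂ‖ = ‖⟪b, y⟫_ℂ‖ by
          rw [← inner_conj_symm b y, Complex.norm_conj]]
        field_simp
      have hyn : ‖y‖ ≤ ‖⟪a, e⟫_ℂ‖ + ‖⟪e, b⟫_ℂ‖ := by
        have hsq : ‖y‖ ^ 2 ≤ ‖⟪a, y⟫_ℂ‖ + ‖⟪b, y⟫_ℂ‖ := by
          have e1 : (‖y‖ : ℝ) ^ 2 = RCLike.re ⟪y, y⟫_ℂ := (inner_self_eq_norm_sq (𝕜 := ℂ) y).symm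
          have e2 : ⟪y, y⟫_ℂ = ⟪a, y⟫_ℂ + ⟪b, y⟫_ℂ := by rw [hy, inner_add_left]
          rw [e1, e2]
          calc RCLike.re (⟪a, y⟫_ℂ + ⟪b, y⟫_ℂ)
              = (⟪a, y⟫_ℂ).re + (⟪b, y⟫_ℂ).re := by simp [Complex.add_re]
            _ ≤ ‖⟪a, y⟫_ℂ‖ + ‖⟪b, y⟫_ℂ‖ :=
              add_le_add (Complex.re_le_norm _) (Complex.re_le_norm _)
        have := le_of_mul_le_mul_left (a := ‖y‖)
          (b := ‖y‖) (c := ‖⟪a, e⟫_ℂ‖ + ‖⟪e, b⟫_ℂ‖) ?_ hpos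
        · exact this
        · rw [mul_add, hae, hbe]
          nlinarith [hsq]
    -- apply the key inequality
      have hkey := my_key a b e he α hα0 hα1
      have hstep1 : ‖y‖ ^ 2 ≤ (‖⟪a, e⟫_ℂ‖ + ‖⟪e, b⟫_ℂ‖) ^ 2 :=
        pow_le_pow_left₀ (norm_nonneg y) hyn 2
      have hsqrt : Real.sqrt (‖a‖^4 + ‖b‖^4 + 2*‖⟪a,b⟫_ℂ‖^2) ≤ Real.sqrt K :=
        Real.sqrt_le_sqrt hsumK
      have hmid : (1 + α) * (‖a‖ * ‖b‖) ≤ (α + 1) * (opA A T * opA A S) := by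
        rw [show (1 + α) = (α + 1) by ring]
        apply mul_le_mul_of_nonneg_left _ (by linarith)
        exact mul_le_mul hna hnb (norm_nonneg b) (opA_nonneg A T)
      have hlast : (1 - α) * ‖⟪a, b⟫_ℂ‖ ≤ (1 - α) * wA A G :=
        mul_le_mul_of_nonneg_left hab (by linarith)
      rw [hRHS]
      linarith [hkey, hstep1, hsqrt, hmid, hlast]
  -- conclude
  have hle : opA A (T + S) ≤ Real.sqrt RHS := by
    apply Real.sSup_le
    · rintro c ⟨x, hx, rfl⟩
      have h := pointwise x hx
      calc nA A ((T + S) x) = Real.sqrt (nA A ((T + S) x) ^ 2) :=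
            (Real.sqrt_sq (Real.sqrt_nonneg _)).symm
        _ ≤ Real.sqrt RHS := Real.sqrt_le_sqrt h
    · exact Real.sqrt_nonneg RHS
  calc opA A (T + S) ^ 2 ≤ Real.sqrt RHS ^ 2 :=
        pow_le_pow_left₀ (opA_nonneg A (T + S)) hle 2
    _ = RHS := Real.sq_sqrt hRHS0
end
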